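/- arXiv:1602.03590 — 5 statements merged into one kernel-verified Lean document; each statement's English description precedes it below -/
import Mathlib

section
/- If a connected finite simple graph G on n vertices admits a real skew-symmetric matrix A with n distinct eigenvalues whose off-diagonal support is exactly the edge set of G, then the matching number of G equals ⌊n/2⌋. -/
set_option linter.unusedSectionVars false
set_option maxHeartbeats 1000000
open Matrix Polynomial

section Helpers
variable {V : Type} [Fintype V] [DecidableEq V]

lemma skew_diag (M : Matrix V V ℂ) (h : Mᵀ = -M) (v : V) : M v v = 0 := by
  have := congrFun (congrFun h v) v
  simp only [transpose_apply, Matrix.neg_apply] at this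
  linear_combination this / 2

lemma skew_apply (M : Matrix V V ℂ) (h : Mᵀ = -M) (i j : V) : M j i = - M i j := by
  have := congrFun (congrFun h i) j
  simpa only [transpose_apply, Matrix.neg_apply] using this

noncomputable def ext0 (p : V → Prop) [DecidablePred p] (x : {v // p v} → ℂ) : V → ℂ :=
  fun v => if h : p v then x ⟨v, h⟩ else 0

lemma mulVec_ext0 (M : Matrix V V ℂ) (p : V → Prop) [DecidablePred p]
    (x : {v // p v} → ℂ) (i : V) :
    (M *ᵥ ext0 p x) i = ∑ j : {v // p v}, M i j * x j := by
  have h1 : (M *ᵥ ext0 p x) i = ∑ j : V, M i j * ext0 p x j := rfl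
  rw [h1, ← Finset.sum_filter_of_ne (p := p) (fun j _ hj => by
    by_contra hp
    exact hj (by simp [ext0, hp, mul_zero])),
    Finset.sum_subtype (p := p) (Finset.univ.filter p) (fun y => by simp)
      (fun j => M i j * ext0 p x j)]
  refine Finset.sum_congr rfl fun j _ => ?_
  simp [ext0, j.2]

lemma submatrix_mulVec_eq (M : Matrix V V ℂ) (p : V → Prop) [DecidablePred p]
    (x : {v // p v} → ℂ) (s : {v // p v}) :
    ((M.submatrix (Subtype.val) (Subtype.val)) *ᵥ x) s = ∑ j : {v // p v}, M s j * x j := rfl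

lemma inv_skew (M : Matrix V V ℂ) (h : Mᵀ = -M) (hdet : M.det ≠ 0) : (M⁻¹)ᵀ = -(M⁻¹) := by
  rw [Matrix.transpose_nonsing_inv, h]
  refine Matrix.inv_eq_right_inv ?_
  rw [neg_mul_neg, Matrix.mul_nonsing_inv _ (isUnit_iff_ne_zero.mpr hdet)]

/-- Restriction of an invertible skew matrix after deleting `v0` and `w` stays invertible,
provided `M⁻¹ w v0 ≠ 0`. -/
lemma restrict_det_ne_zero (M : Matrix V V ℂ) (hsk : Mᵀ = -M) (hdet : M.det ≠ 0)
    (v0 w : V) (hvw : v0 ≠ w) (hNw : M⁻¹ w v0 ≠ 0) :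
    (M.submatrix (Subtype.val : {v // v ≠ v0 ∧ v ≠ w} → V) Subtype.val).det ≠ 0 := by
  set N := M⁻¹ with hN
  have hNsk : Nᵀ = -N := inv_skew M hsk hdet
  have hNM : N * M = 1 := Matrix.nonsing_inv_mul _ (isUnit_iff_ne_zero.mpr hdet)
  set p : V → Prop := fun v => v ≠ v0 ∧ v ≠ w with hp
  intro hD
  obtain ⟨x, hx0, hxz⟩ := (Matrix.exists_mulVec_eq_zero_iff).mpr hD
  set z : V → ℂ := M *ᵥ ext0 p x with hz
  have hxhat : ext0 p x = N *ᵥ z := by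
    rw [hz, Matrix.mulVec_mulVec, hNM, Matrix.one_mulVec]
  have claim1 : ∀ i, p i → z i = 0 := by
    intro i hi
    rw [hz, mulVec_ext0]
    have := congrFun hxz ⟨i, hi⟩
    rwa [submatrix_mulVec_eq] at this
  have hzw : z w = 0 := by
    have h0 : ext0 p x v0 = 0 := by simp [ext0, hp]
    rw [hxhat] at h0
    have hsum : (N *ᵥ z) v0 = ∑ j : V, N v0 j * z j := rfl
    rw [hsum, Finset.sum_eq_single w (fun b _ hb => by
      by_cases hbv : b = v0
      · rw [hbv, skew_diag N hNsk, zero_mul]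
      · rw [claim1 b ⟨hbv, hb⟩, mul_zero]) (by simp)] at h0
    have hNvw : N v0 w ≠ 0 := by
      rw [skew_apply N hNsk w v0]
      exact neg_ne_zero.mpr hNw
    exact (mul_eq_zero.mp h0).resolve_left hNvw
  have hzv0 : z v0 = 0 := by
    have h0 : ext0 p x w = 0 := by simp [ext0, hp]
    rw [hxhat] at h0
    have hsum : (N *ᵥ z) w = ∑ j : V, N w j * z j := rfl
    rw [hsum, Finset.sum_eq_single v0 (fun b _ hb => by
      by_cases hbw : b = w
      · rw [hbw, hzw, mul_zero]
      · rw [claim1 b ⟨hb, hbw⟩, mul_zero]) (by simp)] at h0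
    exact (mul_eq_zero.mp h0).resolve_left hNw
  have hz0 : z = 0 := by
    funext i
    by_cases h1 : i = v0
    · rw [h1]; exact hzv0
    · by_cases h2 : i = w
      · rw [h2]; exact hzw
      · exact claim1 i ⟨h1, h2⟩
  have hext : ext0 p x = 0 := by rw [hxhat, hz0, Matrix.mulVec_zero]
  apply hx0
  funext s
  have := congrFun hext s.1
  simp only [ext0, Pi.zero_apply] at this
  rwa [dif_pos s.2] at this

/-- For a singular skew matrix whose kernel is spanned by `u`, deleting a vertex `v`
with `u v ≠ 0` yields an invertible matrix. -/
lemma restrict_det_ne_zero_ker (M : Matrix V V ℂ) (hsk : Mᵀ = -M)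
    (u : V → ℂ) (hu : M *ᵥ u = 0) (hspan : ∀ y, M *ᵥ y = 0 → ∃ c : ℂ, y = c • u)
    (v : V) (huv : u v ≠ 0) :
    (M.submatrix (Subtype.val : {x // x ≠ v} → V) Subtype.val).det ≠ 0 := by
  set p : V → Prop := fun x => x ≠ v with hp
  intro hD
  obtain ⟨x, hx0, hxz⟩ := (Matrix.exists_mulVec_eq_zero_iff).mpr hD
  set z : V → ℂ := M *ᵥ ext0 p x with hz
  have claim1 : ∀ i, i ≠ v → z i = 0 := by
    intro i hi
    rw [hz, mulVec_ext0]
    have := congrFun hxz ⟨i, hi⟩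
    rwa [submatrix_mulVec_eq] at this
  have hudot : u ⬝ᵥ z = 0 := by
    rw [hz, Matrix.dotProduct_mulVec]
    have huM : u ᵥ* M = 0 := by
      have : u ᵥ* (Mᵀ)ᵀ = Mᵀ *ᵥ u := Matrix.vecMul_transpose Mᵀ u
      rw [Matrix.transpose_transpose, hsk] at this
      rw [this, Matrix.neg_mulVec, hu, neg_zero]
    rw [huM, zero_dotProduct]
  have hzv : z v = 0 := by
    have hsum : u ⬝ᵥ z = ∑ j : V, u j * z j := rfl
    rw [hsum, Finset.sum_eq_single v (fun b _ hb => by rw [claim1 b hb, mul_zero])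
      (by simp)] at hudot
    exact (mul_eq_zero.mp hudot).resolve_left huv
  have hz0 : z = 0 := by
    funext i
    by_cases h1 : i = v
    · rw [h1]; exact hzv
    · exact claim1 i h1
  obtain ⟨c, hc⟩ := hspan (ext0 p x) hz0
  have hcv := congrFun hc v
  simp only [ext0, Pi.smul_apply, smul_eq_mul] at hcv
  rw [dif_neg (by simp [hp])] at hcv
  have hc0 : c = 0 := by
    rcases mul_eq_zero.mp hcv.symm with h | h
    · exact h
    · exact absurd h huv
  apply hx0
  funext s
  have := congrFun hc s.1
  rw [hc0] at this
  simp only [ext0, Pi.smul_apply, smul_eq_mul, zero_mul] at this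
  rwa [dif_pos s.2] at this

/-- distinct eigenvalues imply the kernel is at most one dimensional -/
lemma ker_span_of_nodup {n : ℕ} (M : Matrix (Fin n) (Fin n) ℂ)
    (hnd : M.charpoly.roots.Nodup) (u : Fin n → ℂ) (hu : M *ᵥ u = 0) (hu0 : u ≠ 0) :
    ∀ y, M *ᵥ y = 0 → ∃ c : ℂ, y = c • u := by
  have hsq : Squarefree M.charpoly :=
    ((Polynomial.nodup_roots_iff_of_splits (M.charpoly_monic.ne_zero)
      (IsAlgClosed.splits _)).mp hnd).squarefree
  set φ : Module.End ℂ (Fin n → ℂ) := Matrix.toLin' M with hφ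
  have hchar : φ.charpoly = M.charpoly := by
    rw [← LinearMap.charpoly_toMatrix (Matrix.toLin' M) (Pi.basisFun ℂ (Fin n)),
      LinearMap.toMatrix_eq_toMatrix', LinearMap.toMatrix'_toLin']
  have htd : M.charpoly.natTrailingDegree ≤ 1 := by
    by_contra h
    push_neg at h
    have hdvd : (X : ℂ[X]) * X ∣ M.charpoly := by
      rw [← sq]
      rw [Polynomial.X_pow_dvd_iff]
      intro d hd
      exact Polynomial.coeff_eq_zero_of_lt_natTrailingDegree (lt_of_lt_of_le hd h)
    exact Polynomial.not_isUnit_X (hsq X hdvd)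
  have hker_le : LinearMap.ker φ ≤ φ.maxGenEigenspace 0 := by
    intro y hy
    rw [Module.End.mem_maxGenEigenspace]
    exact ⟨1, by simpa using hy⟩
  have hfr : Module.finrank ℂ (LinearMap.ker φ) ≤ 1 := by
    calc Module.finrank ℂ (LinearMap.ker φ) ≤ Module.finrank ℂ (φ.maxGenEigenspace 0) :=
          Submodule.finrank_mono hker_le
      _ = φ.charpoly.natTrailingDegree := LinearMap.finrank_maxGenEigenspace_zero_eq φ
      _ ≤ 1 := by rw [hchar]; exact htd
  have humem : u ∈ LinearMap.ker φ := by
    rw [LinearMap.mem_ker, hφ, Matrix.toLin'_apply, hu]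
  have hspan_le : Submodule.span ℂ {u} ≤ LinearMap.ker φ := by
    rw [Submodule.span_le, Set.singleton_subset_iff]
    exact humem
  have heq : Submodule.span ℂ {u} = LinearMap.ker φ :=
    Submodule.eq_of_le_of_finrank_le hspan_le
      (le_trans hfr (finrank_span_singleton hu0).ge)
  intro y hy
  have : y ∈ Submodule.span ℂ {u} := by
    rw [heq, LinearMap.mem_ker, hφ, Matrix.toLin'_apply, hy]
  obtain ⟨c, hc⟩ := Submodule.mem_span_singleton.mp this
  exact ⟨c, hc.symm⟩

end Helpers

/-- From an invertible skew matrix we extract a fixed-point free involution supported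
on the nonzero entries. -/
lemma skew_matching (k : ℕ) : ∀ (V : Type) [Fintype V] [DecidableEq V]
    (M : Matrix V V ℂ), Fintype.card V = k → Mᵀ = -M → M.det ≠ 0 →
    ∃ f : V → V, Function.Involutive f ∧ (∀ v, f v ≠ v) ∧ (∀ v, M v (f v) ≠ 0) := by
  induction k using Nat.strong_induction_on with
  | _ k ih =>
    intro V _ _ M hcard hsk hdet
    rcases isEmpty_or_nonempty V with hV | hV
    · exact ⟨id, fun v => rfl, fun v => isEmptyElim v, fun v => isEmptyElim v⟩
    · obtain ⟨v0⟩ := hV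
      have hMN : M * M⁻¹ = 1 := Matrix.mul_nonsing_inv _ (isUnit_iff_ne_zero.mpr hdet)
      have hsum : ∑ j : V, M v0 j * M⁻¹ j v0 = 1 := by
        have := congrFun (congrFun hMN v0) v0
        simpa [Matrix.mul_apply, Matrix.one_apply] using this
      obtain ⟨w, -, hw⟩ : ∃ w ∈ Finset.univ, M v0 w * M⁻¹ w v0 ≠ 0 :=
        Finset.exists_ne_zero_of_sum_ne_zero (by rw [hsum]; exact one_ne_zero)
      have hMw : M v0 w ≠ 0 := fun h => hw (by rw [h, zero_mul])
      have hNw : M⁻¹ w v0 ≠ 0 := fun h => hw (by rw [h, mul_zero])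
      have hwv0 : w ≠ v0 := by
        intro h
        rw [h] at hMw
        exact hMw (skew_diag M hsk v0)
      set p : V → Prop := fun v => v ≠ v0 ∧ v ≠ w with hp
      set D := M.submatrix (Subtype.val : {v // p v} → V) Subtype.val with hD
      have hDdet : D.det ≠ 0 := restrict_det_ne_zero M hsk hdet v0 w hwv0.symm hNw
      have hDsk : Dᵀ = -D := by
        ext s t
        simp only [hD, transpose_apply, submatrix_apply, neg_apply]
        exact skew_apply M hsk s.1 t.1
      have hcardlt : Fintype.card {v // p v} < k := by
        rw [← hcard]
        exact Fintype.card_subtype_lt (x := v0) (by simp [hp])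
      obtain ⟨g, hg1, hg2, hg3⟩ := ih (Fintype.card {v // p v}) hcardlt
        {v // p v} D rfl hDsk hDdet
      classical
      set f : V → V := fun v => if h1 : v = v0 then w else if h2 : v = w then v0
        else (g ⟨v, h1, h2⟩ : V) with hf
      have hfv0 : f v0 = w := by simp [hf]
      have hfw : f w = v0 := by simp [hf, hwv0]
      have hfo : ∀ (v : V) (h1 : v ≠ v0) (h2 : v ≠ w), f v = (g ⟨v, h1, h2⟩ : V) := by
        intro v h1 h2
        simp [hf, h1, h2]
      refine ⟨f, ?_, ?_, ?_⟩
      · intro v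
        by_cases h1 : v = v0
        · rw [h1, hfv0, hfw]
        · by_cases h2 : v = w
          · rw [h2, hfw, hfv0]
          · rw [hfo v h1 h2]
            have hgm := (g ⟨v, h1, h2⟩).2
            rw [hfo _ hgm.1 hgm.2]
            have : (⟨((g ⟨v, h1, h2⟩ : {v // p v}) : V), hgm⟩ : {v // p v}) = g ⟨v, h1, h2⟩ :=
              Subtype.eta _ _
            rw [this, hg1 ⟨v, h1, h2⟩]
      · intro v
        by_cases h1 : v = v0
        · rw [h1, hfv0]; exact hwv0
        · by_cases h2 : v = w
          · rw [h2, hfw]; exact Ne.symm (h2 ▸ h1)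
          · rw [hfo v h1 h2]
            intro hcontra
            exact hg2 ⟨v, h1, h2⟩ (Subtype.val_injective hcontra)
      · intro v
        by_cases h1 : v = v0
        · rw [h1, hfv0]; exact hMw
        · by_cases h2 : v = w
          · rw [h2, hfw, skew_apply M hsk v0 w]
            exact neg_ne_zero.mpr hMw
          · rw [hfo v h1 h2]
            exact hg3 ⟨v, h1, h2⟩

/-- Build a matching subgraph from a fixed-point-free involution on a set of vertices. -/
lemma matching_of_involution {V : Type*} (G : SimpleGraph V) (s : Set V) (f : V → V)
    (h : ∀ v ∈ s, f v ∈ s ∧ f (f v) = v ∧ f v ≠ v ∧ G.Adj v (f v)) :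
    ∃ M : G.Subgraph, M.IsMatching ∧ M.verts = s := by
  refine ⟨{ verts := s
            Adj := fun a b => (a ∈ s ∧ b = f a) ∨ (b ∈ s ∧ a = f b)
            adj_sub := ?_
            edge_vert := ?_
            symm := ?_ }, ?_, rfl⟩
  · rintro v w (⟨hv, rfl⟩ | ⟨hw, rfl⟩)
    · exact (h v hv).2.2.2
    · exact ((h w hw).2.2.2).symm
  · rintro v w (⟨hv, rfl⟩ | ⟨hw, rfl⟩)
    · exact hv
    · exact (h w hw).1
  · constructor
    rintro v w (⟨hv, rfl⟩ | ⟨hw, rfl⟩)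
    · exact Or.inr ⟨hv, rfl⟩
    · exact Or.inl ⟨hw, rfl⟩
  · intro v hv
    refine ⟨f v, Or.inl ⟨hv, rfl⟩, ?_⟩
    rintro y (⟨hv', rfl⟩ | ⟨hy, rfl⟩)
    · rfl
    · exact ((h y hy).2.1).symm
/-- A matching covers twice as many vertices as it has edges. -/
lemma IsMatching.verts_ncard {V : Type*} [Fintype V] {G : SimpleGraph V} (M : G.Subgraph)
    (hm : M.IsMatching) : M.verts.ncard = 2 * M.edgeSet.ncard := by
  classical
  have hdeg : ∀ v : M.verts, M.coe.degree v = 1 := by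
    intro v
    have h' := (SimpleGraph.Subgraph.isMatching_iff_forall_degree.mp hm) v v.2
    rw [SimpleGraph.Subgraph.coe_degree]
    convert h'
  have hsum := M.coe.sum_degrees_eq_twice_card_edges
  have hcard : Fintype.card M.verts = 2 * M.coe.edgeFinset.card := by
    rw [← hsum]
    trans (∑ _v : M.verts, 1)
    · simp
    · refine Finset.sum_congr rfl (fun v _ => ?_)
      symm
      convert hdeg v
  have h1 : M.verts.ncard = Fintype.card M.verts := by
    rw [Set.ncard_eq_toFinset_card']
    exact (Set.toFinset_card _)
  have h2 : M.coe.edgeFinset.card = M.edgeSet.ncard := by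
    rw [← Set.ncard_coe_finset, SimpleGraph.coe_edgeFinset]
    rw [← SimpleGraph.Subgraph.image_coe_edgeSet_coe M]
    exact (Set.ncard_image_of_injective _ (Sym2.map.injective Subtype.val_injective)).symm
  rw [h1, hcard, h2]


open Matrix

/-- The matching number of a graph: the maximum number of edges in a matching. -/
noncomputable def matchNum {V : Type*} [Fintype V] (G : SimpleGraph V) : ℕ :=
  sSup {k | ∃ M : G.Subgraph, M.IsMatching ∧ M.edgeSet.ncard = k}

/-- If a connected graph `G` on `n` vertices admits a real skew-symmetric matrix with
`n` distinct eigenvalues whose off-diagonal support is exactly the edge set of `G`,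
then the matching number of `G` is `⌊n/2⌋`. -/
theorem matchNum_of_distinct_eigenvalues {n : ℕ} (G : SimpleGraph (Fin n))
    (hG : G.Connected) (A : Matrix (Fin n) (Fin n) ℝ) (hskew : Aᵀ = -A)
    (hsupp : ∀ i j : Fin n, i ≠ j → (A i j ≠ 0 ↔ G.Adj i j))
    (hdist : ((A.map Complex.ofReal).charpoly.roots).Nodup) :
    matchNum G = n / 2 := by
  classical
  set M : Matrix (Fin n) (Fin n) ℂ := A.map Complex.ofReal with hM
  have hMsk : Mᵀ = -M := by
    ext i j
    have hA : A j i = - A i j := by simpa using congrFun (congrFun hskew i) j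
    simp [hM, Matrix.map_apply, hA]
  have hMA : ∀ i j, M i j ≠ 0 ↔ A i j ≠ 0 := by
    intro i j
    simp [hM, Matrix.map_apply, Complex.ofReal_eq_zero]
  -- main construction : a matching with `n / 2` edges
  have key : ∃ Ms : G.Subgraph, Ms.IsMatching ∧ Ms.edgeSet.ncard = n / 2 := by
    by_cases hdet : M.det = 0
    · -- singular case : `n` is odd, delete one vertex
      obtain ⟨u, hu0, hu⟩ := Matrix.exists_mulVec_eq_zero_iff.mpr hdet
      obtain ⟨v, hv⟩ := Function.ne_iff.mp hu0
      have hv : u v ≠ 0 := by simpa using hv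
      have hspan := ker_span_of_nodup M hdist u hu hu0
      have hDdet := restrict_det_ne_zero_ker M hMsk u hu hspan v hv
      set D := M.submatrix (Subtype.val : {x // x ≠ v} → Fin n) Subtype.val with hD
      have hDsk : Dᵀ = -D := by
        ext s t
        simp only [hD, transpose_apply, submatrix_apply, neg_apply]
        exact skew_apply M hMsk s.1 t.1
      obtain ⟨g, hg1, hg2, hg3⟩ := skew_matching (Fintype.card {x // x ≠ v})
        {x // x ≠ v} D rfl hDsk hDdet
      set f : Fin n → Fin n := fun x => if h : x ≠ v then (g ⟨x, h⟩ : Fin n) else x with hf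
      have hfo : ∀ (x : Fin n) (h : x ≠ v), f x = (g ⟨x, h⟩ : Fin n) := by
        intro x h
        simp [hf, h]
      have hcond : ∀ x ∈ {y : Fin n | y ≠ v}, f x ∈ {y : Fin n | y ≠ v} ∧ f (f x) = x ∧
          f x ≠ x ∧ G.Adj x (f x) := by
        intro x hx
        have hx' : x ≠ v := hx
        have hgm := (g ⟨x, hx'⟩).2
        have hfx : f x = (g ⟨x, hx'⟩ : Fin n) := hfo x hx'
        have hne : f x ≠ x := by
          rw [hfx]
          intro hcontra
          exact hg2 ⟨x, hx'⟩ (Subtype.val_injective hcontra)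
        refine ⟨by rw [hfx]; exact hgm, ?_, hne, ?_⟩
        · rw [hfx, hfo _ hgm]
          have : (⟨((g ⟨x, hx'⟩ : {y // y ≠ v}) : Fin n), hgm⟩ : {y // y ≠ v}) = g ⟨x, hx'⟩ :=
            Subtype.eta _ _
          rw [this, hg1 ⟨x, hx'⟩]
        · have hMne : M x (f x) ≠ 0 := by
            rw [hfx]
            exact hg3 ⟨x, hx'⟩
          exact (hsupp x (f x) (Ne.symm hne)).mp ((hMA _ _).mp hMne)
      obtain ⟨Ms, hmat, hverts⟩ := matching_of_involution G {y : Fin n | y ≠ v} f hcond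
      have hvc : Ms.verts.ncard = n - 1 := by
        rw [hverts, Set.ncard_eq_toFinset_card', Set.toFinset_card]
        have h1 : Fintype.card {y : Fin n // ¬ y = v} = n - 1 := by
          rw [Fintype.card_subtype_compl, Fintype.card_subtype_eq, Fintype.card_fin]
        simpa [Finset.filter_ne'] using h1
      have hedge := IsMatching.verts_ncard Ms hmat
      have hn1 : 0 < n := v.pos
      exact ⟨Ms, hmat, by omega⟩
    · -- invertible case : perfect matching
      obtain ⟨g, hg1, hg2, hg3⟩ := skew_matching n (Fin n) M (by simp) hMsk hdet
      have hcond : ∀ x ∈ (Set.univ : Set (Fin n)), g x ∈ (Set.univ : Set (Fin n)) ∧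
          g (g x) = x ∧ g x ≠ x ∧ G.Adj x (g x) := by
        intro x _
        exact ⟨trivial, hg1 x, hg2 x,
          (hsupp x (g x) (Ne.symm (hg2 x))).mp ((hMA _ _).mp (hg3 x))⟩
      obtain ⟨Ms, hmat, hverts⟩ := matching_of_involution G Set.univ g hcond
      have hvc : Ms.verts.ncard = n := by
        rw [hverts, Set.ncard_univ, Nat.card_eq_fintype_card, Fintype.card_fin]
      have hedge := IsMatching.verts_ncard Ms hmat
      exact ⟨Ms, hmat, by omega⟩
  have hub : ∀ k ∈ {k | ∃ Ms : G.Subgraph, Ms.IsMatching ∧ Ms.edgeSet.ncard = k}, k ≤ n / 2 := by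
    rintro k ⟨Ms, hmat, rfl⟩
    have hedge := IsMatching.verts_ncard Ms hmat
    have hle : Ms.verts.ncard ≤ n := by
      have := Set.ncard_le_ncard (Set.subset_univ Ms.verts) Set.finite_univ
      rwa [Set.ncard_univ, Nat.card_eq_fintype_card, Fintype.card_fin] at this
    omega
  obtain ⟨Ms, hmat, hcard⟩ := key
  have hmem : (n / 2) ∈ {k | ∃ Ms : G.Subgraph, Ms.IsMatching ∧ Ms.edgeSet.ncard = k} :=
    ⟨Ms, hmat, hcard⟩
  refine le_antisymm (csSup_le ⟨n / 2, hmem⟩ hub) (le_csSup ⟨n / 2, hub⟩ hmem)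
end

section
/- For any finite simple graph G, the maximum rank over all real skew-symmetric matrices whose graph is G equals twice the matching number of G. -/
set_option linter.unusedSectionVars false
set_option maxHeartbeats 1600000

open Matrix

/-- The maximum skew rank of a graph `G`: the maximum rank over all real
skew-symmetric matrices whose graph is `G`. -/
noncomputable def maxSkewRank {V : Type*} [Fintype V] [DecidableEq V]
    (G : SimpleGraph V) : ℕ :=
  sSup {r | ∃ A : Matrix V V ℝ, Aᵀ = -A ∧
    (∀ i j : V, i ≠ j → (A i j ≠ 0 ↔ G.Adj i j)) ∧ A.rank = r}

section Aux

open Matrix Finset Submodule Set LinearMap Module Function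

universe u
variable {ι : Type*} [Fintype ι] [DecidableEq ι]

-- L1
lemma skew_diag_s7 {A : Matrix ι ι ℝ} (h : Aᵀ = -A) (i : ι) : A i i = 0 := by
  have := congrFun (congrFun h i) i
  simp only [Matrix.transpose_apply, Matrix.neg_apply] at this
  linarith

-- L2
lemma rank_submatrix_le' {κ : Type*} [Fintype κ] [DecidableEq κ]
    (A : Matrix ι ι ℝ) (f g : κ → ι) : (A.submatrix f g).rank ≤ A.rank := by
  have h : LinearMap.range (A.submatrix f g).mulVecLin ≤
      (LinearMap.range A.mulVecLin).map (LinearMap.funLeft ℝ ℝ f) := by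
    rintro w ⟨x, rfl⟩
    refine ⟨A.mulVec (fun k => ∑ j, if g j = k then x j else 0), ⟨_, rfl⟩, ?_⟩
    funext i
    simp only [LinearMap.funLeft_apply, Matrix.mulVecLin_apply, Matrix.mulVec,
      dotProduct, Matrix.submatrix_apply]
    have : ∀ k, A (f i) k * (∑ j, if g j = k then x j else 0)
        = ∑ j, if g j = k then A (f i) k * x j else 0 := by
      intro k; rw [Finset.mul_sum]; exact Finset.sum_congr rfl fun j _ => by
        rw [mul_ite, mul_zero]
    simp_rw [this]
    rw [Finset.sum_comm]
    refine Finset.sum_congr rfl fun j _ => ?_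
    simp
  rw [Matrix.rank, Matrix.rank]
  calc Module.finrank ℝ (LinearMap.range (A.submatrix f g).mulVecLin)
      ≤ Module.finrank ℝ ((LinearMap.range A.mulVecLin).map (LinearMap.funLeft ℝ ℝ f)) :=
        Submodule.finrank_mono h
    _ ≤ Module.finrank ℝ (LinearMap.range A.mulVecLin) := Submodule.finrank_map_le _ _

-- skew inverse
lemma skew_inv {B : Matrix ι ι ℝ} (hsk : Bᵀ = -B) (hu : IsUnit B) : (B⁻¹)ᵀ = -(B⁻¹) := by
  rw [Matrix.transpose_nonsing_inv, hsk]
  refine Matrix.inv_eq_right_inv ?_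
  rw [Matrix.neg_mul, Matrix.mul_neg, neg_neg,
    Matrix.mul_nonsing_inv _ ((Matrix.isUnit_iff_isUnit_det B).mp hu)]

lemma jacobi {B : Matrix ι ι ℝ} (hsk : Bᵀ = -B) (hu : IsUnit B) (a : ι) :
    ∃ b, B a b ≠ 0 ∧ IsUnit (B.submatrix
      ((↑) : {k : ι // k ≠ a ∧ k ≠ b} → ι) ((↑) : {k : ι // k ≠ a ∧ k ≠ b} → ι)) := by
  have hdet : IsUnit B.det := (Matrix.isUnit_iff_isUnit_det B).mp hu
  have hBC : B * B⁻¹ = 1 := Matrix.mul_nonsing_inv _ hdet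
  set C := B⁻¹ with hC
  have hCsk : Cᵀ = -C := skew_inv hsk hu
  have h1 : (∑ j, B a j * C j a) = 1 := by
    have := congrFun (congrFun hBC a) a
    simpa [Matrix.mul_apply, Matrix.one_apply] using this
  have hex : ∃ j, B a j * C j a ≠ 0 := by
    by_contra h
    push_neg at h
    rw [Finset.sum_eq_zero (fun j _ => h j)] at h1
    norm_num at h1
  obtain ⟨b, hb⟩ := hex
  have hBab : B a b ≠ 0 := fun h => hb (by rw [h, zero_mul])
  have hCba : C b a ≠ 0 := fun h => hb (by rw [h, mul_zero])
  have hba : b ≠ a := by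
    intro h
    exact hBab (h ▸ skew_diag_s7 hsk a)
  have hCab : C a b ≠ 0 := by
    have := congrFun (congrFun hCsk b) a
    simp only [Matrix.transpose_apply, Matrix.neg_apply] at this
    rw [this]
    simpa using hCba
  refine ⟨b, hBab, ?_⟩
  classical
  set p : ι → Prop := fun k => k ≠ a ∧ k ≠ b with hp
  have hpa : ¬ p a := by simp [hp]
  have hpb : ¬ p b := by simp [hp]
  let e2 : Fin 2 → {k : ι // ¬ p k} := fun n => if n = 0 then ⟨a, hpa⟩ else ⟨b, hpb⟩
  have he2 : Function.Bijective e2 := by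
    constructor
    · intro m n hmn
      fin_cases m <;> fin_cases n <;> simp_all [e2]
    · rintro ⟨k, hk⟩
      rw [hp] at hk
      by_cases hka : k = a
      · exact ⟨0, by simp [e2, hka]⟩
      · have hkb : k = b := by tauto
        exact ⟨1, by simp [e2, hkb]⟩
  let E2 : Fin 2 ≃ {k : ι // ¬ p k} := Equiv.ofBijective e2 he2
  let e : ({k : ι // p k} ⊕ Fin 2) ≃ ι :=
    (Equiv.sumCongr (Equiv.refl _) E2).trans (Equiv.sumCompl p)
  have hea : e (Sum.inr 0) = a := by simp [e, E2, Equiv.ofBijective, e2, Equiv.sumCompl]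
  have heb : e (Sum.inr 1) = b := by simp [e, E2, Equiv.ofBijective, e2, Equiv.sumCompl]
  set M := B.submatrix e e with hMdef
  set N := C.submatrix e e with hNdef
  have hMN : M * N = 1 := by
    rw [hMdef, hNdef, Matrix.submatrix_mul_equiv, hBC, Matrix.submatrix_one_equiv]
  set D := M.toBlocks₁₁ with hD
  set Q := M.toBlocks₁₂
  set R := M.toBlocks₂₁
  set P := M.toBlocks₂₂
  set Q' := N.toBlocks₁₂ with hQ'
  set X := N.toBlocks₂₂ with hX
  have hM : M = Matrix.fromBlocks D Q R P := (Matrix.fromBlocks_toBlocks M).symm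
  have hN : N = Matrix.fromBlocks N.toBlocks₁₁ Q' N.toBlocks₂₁ X :=
    (Matrix.fromBlocks_toBlocks N).symm
  have key : M * Matrix.fromBlocks 1 Q' 0 X = Matrix.fromBlocks D 0 R 1 := by
    have h2 := hMN
    rw [hM, hN, Matrix.fromBlocks_multiply, ← Matrix.fromBlocks_one] at h2
    have h12 := congrArg Matrix.toBlocks₁₂ h2
    have h22 := congrArg Matrix.toBlocks₂₂ h2
    simp only [Matrix.toBlocks_fromBlocks₁₂, Matrix.toBlocks_fromBlocks₂₂] at h12 h22
    rw [hM, Matrix.fromBlocks_multiply]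
    simp only [Matrix.mul_one, Matrix.mul_zero, add_zero, h12, h22]
  have hdetM : M.det = B.det := Matrix.det_submatrix_equiv_self e B
  have hXdet : X.det = C b a * C b a := by
    have hX00 : X 0 0 = C a a := by simp [hX, hNdef, Matrix.toBlocks₂₂, hea]
    have hX11 : X 1 1 = C b b := by simp [hX, hNdef, Matrix.toBlocks₂₂, heb]
    have hX01 : X 0 1 = C a b := by simp [hX, hNdef, Matrix.toBlocks₂₂, hea, heb]
    have hX10 : X 1 0 = C b a := by simp [hX, hNdef, Matrix.toBlocks₂₂, hea, heb]
    have hCabba : C a b = -C b a := by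
      have := congrFun (congrFun hCsk b) a
      simpa [Matrix.transpose_apply, Matrix.neg_apply] using this
    rw [Matrix.det_fin_two, hX00, hX11, hX01, hX10, skew_diag_s7 hCsk, skew_diag_s7 hCsk, hCabba]
    ring
  have hdetkey := congrArg Matrix.det key
  rw [Matrix.det_mul, Matrix.det_fromBlocks_zero₂₁, Matrix.det_fromBlocks_zero₁₂] at hdetkey
  simp only [Matrix.det_one, one_mul, mul_one] at hdetkey
  have hdetD : IsUnit D.det := by
    rw [← hdetkey, hdetM, hXdet]
    exact hdet.mul (IsUnit.mul (isUnit_iff_ne_zero.mpr hCba) (isUnit_iff_ne_zero.mpr hCba))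
  have hDeq : D = B.submatrix ((↑) : {k : ι // k ≠ a ∧ k ≠ b} → ι)
      ((↑) : {k : ι // k ≠ a ∧ k ≠ b} → ι) := rfl
  exact (Matrix.isUnit_iff_isUnit_det _).mpr (hDeq ▸ hdetD)


section GraphPart

variable {V : Type u} [Fintype V] [DecidableEq V]

lemma exists_principal (A : Matrix V V ℝ) (hsk : Aᵀ = -A) :
    ∃ S : Finset V, S.card = A.rank ∧
      IsUnit (A.submatrix ((↑) : S → V) ((↑) : S → V)) := by
  classical
  have hrank : A.rank = finrank ℝ (span ℝ (Set.range Aᵀ)) := Matrix.rank_eq_finrank_span_cols A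
  obtain ⟨t, hts, hspan, hli⟩ := exists_linearIndependent ℝ (Set.range Aᵀ)
  have htfin : t.Finite := Set.Finite.subset (Set.finite_range _) hts
  haveI : Fintype t := htfin.fintype
  choose g hg using fun v : t => hts v.2
  have hginj : Function.Injective g := fun u v huv =>
    Subtype.ext (by rw [← hg u, ← hg v, huv])
  set S : Finset V := Finset.univ.image g with hS
  -- the columns of A indexed by S
  set b : S → (V → ℝ) := fun j => Aᵀ (j : V) with hb
  have hmem : ∀ j : S, b j ∈ t := by
    rintro ⟨j, hj⟩
    rw [hS, Finset.mem_image] at hj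
    obtain ⟨v, -, rfl⟩ := hj
    rw [hb]
    simp only
    rw [hg v]
    exact v.2
  have hrangeb : Set.range b = t := by
    apply Set.Subset.antisymm
    · rintro w ⟨j, rfl⟩; exact hmem j
    · intro w hw
      refine ⟨⟨g ⟨w, hw⟩, Finset.mem_image.mpr ⟨⟨w, hw⟩, Finset.mem_univ _, rfl⟩⟩, ?_⟩
      rw [hb]; simp only; rw [hg ⟨w, hw⟩]
  have hcard : S.card = A.rank := by
    rw [hS, Finset.card_image_of_injective _ hginj, Finset.card_univ, hrank, ← hspan,
      finrank_span_set_eq_card hli, Set.toFinset_card]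
  -- b is linearly independent
  have hσ : ∀ j : S, b j ∈ t := hmem
  set σ : S → t := fun j => ⟨b j, hmem j⟩ with hσdef
  have hσinj : Function.Injective σ := by
    intro j1 j2 h12
    have hbeq : b j1 = b j2 := congrArg Subtype.val h12
    obtain ⟨j1v, hj1⟩ := j1; obtain ⟨j2v, hj2⟩ := j2
    rw [hS, Finset.mem_image] at hj1 hj2
    obtain ⟨v1, -, rfl⟩ := hj1
    obtain ⟨v2, -, rfl⟩ := hj2
    have : (v1 : V → ℝ) = (v2 : V → ℝ) := by
      rw [← hg v1, ← hg v2]; exact hbeq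
    have hv : v1 = v2 := Subtype.ext this
    exact Subtype.ext (congrArg g hv)
  have hlib : LinearIndependent ℝ b := by
    have := hli.comp σ hσinj
    exact this
  -- the restriction map
  set π : (V → ℝ) →ₗ[ℝ] (S → ℝ) := LinearMap.funLeft ℝ ℝ ((↑) : S → V) with hπ
  set W : Submodule ℝ (V → ℝ) := span ℝ (Set.range Aᵀ) with hW
  -- the matrix A[S, V]
  set A' : Matrix S V ℝ := A.submatrix ((↑) : S → V) (fun j => j) with hA'
  have hA'rank : A'.rank = S.card := by
    have hrows : LinearIndependent ℝ (fun s : S => A' s) := by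
      have hneg : (fun s : S => A' s) = fun s : S => -(b s) := by
        funext s
        funext j
        have := congrFun (congrFun hsk j) (s : V)
        simp only [Matrix.transpose_apply, Matrix.neg_apply] at this
        simp [hA', hb, Matrix.submatrix_apply]
        linarith [this]
      rw [hneg]
      have hmap := hlib.map' (-LinearMap.id) (by
        rw [LinearMap.ker_eq_bot]
        intro x y hxy
        simpa using hxy)
      have : (⇑(-(LinearMap.id : (V → ℝ) →ₗ[ℝ] (V → ℝ))) ∘ b) = fun s : S => -(b s) := by
        funext s; simp
      rwa [this] at hmap
    rw [LinearIndependent.rank_matrix (M := A') hrows, Fintype.card_coe]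
  have hmapW : W.map π = span ℝ (Set.range A'ᵀ) := by
    rw [hW, Submodule.map_span]
    change span ℝ (⇑π '' Set.range A.col) = span ℝ (Set.range A'.col)
    rw [← Set.range_comp]
    have hcomp : ⇑π ∘ A.col = A'.col := by
      funext j
      funext s
      simp [hπ, hA', LinearMap.funLeft_apply]
    rw [hcomp]
  have hfinmap : finrank ℝ (W.map π) = S.card := by
    rw [hmapW]
    change finrank ℝ (span ℝ (Set.range A'.col)) = _
    rw [← Matrix.rank_eq_finrank_span_cols, hA'rank]
  -- kernel of π restricted to W is trivial
  set L : W →ₗ[ℝ] (S → ℝ) := π.comp W.subtype with hL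
  have hrangeL : LinearMap.range L = W.map π := by
    rw [hL, LinearMap.range_comp, Submodule.range_subtype]
  have hkerL : LinearMap.ker L = ⊥ := by
    have h1 := LinearMap.finrank_range_add_finrank_ker L
    rw [hrangeL, hfinmap] at h1
    have h2 : finrank ℝ W = S.card := by rw [hW, ← hrank, hcard]
    rw [h2] at h1
    have h3 : finrank ℝ (LinearMap.ker L) = 0 := by omega
    exact Submodule.finrank_eq_zero.mp h3
  have hdisj : Disjoint (span ℝ (Set.range b)) (LinearMap.ker π) := by
    rw [hrangeb, hspan]
    rw [Submodule.disjoint_def]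
    intro x hxW hxker
    have : L ⟨x, hxW⟩ = 0 := by
      rw [hL]; simpa using (LinearMap.mem_ker.mp hxker)
    have : (⟨x, hxW⟩ : W) ∈ LinearMap.ker L := LinearMap.mem_ker.mpr this
    rw [hkerL] at this
    simpa using this
  have hfinal : LinearIndependent ℝ (⇑π ∘ b) := hlib.map hdisj
  refine ⟨S, hcard, ?_⟩
  rw [← Matrix.linearIndependent_cols_iff_isUnit]
  have : (A.submatrix ((↑) : S → V) ((↑) : S → V)).col = ⇑π ∘ b := by
    funext i
    funext s
    simp [hπ, hb, LinearMap.funLeft_apply]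
  rw [this]
  exact hfinal

lemma matching_of_unit (G : SimpleGraph V) :
    ∀ (n : ℕ) (ι : Type u) [Fintype ι] [DecidableEq ι],
      Fintype.card ι = n → ∀ (f : ι → V), Function.Injective f →
      ∀ (B : Matrix ι ι ℝ), Bᵀ = -B → (∀ a b, B a b ≠ 0 → G.Adj (f a) (f b)) → IsUnit B →
      ∃ M : G.Subgraph, M.IsMatching ∧ M.verts = Set.range f ∧ n = 2 * M.edgeSet.ncard := by
  intro n
  induction n using Nat.strong_induction_on with
  | _ n IH =>
  intro ι _ _ hn f hf B hsk hsupp hu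
  rcases isEmpty_or_nonempty ι with hE | hNE
  · refine ⟨⊥, ?_, ?_, ?_⟩
    · intro v hv
      simp only [SimpleGraph.Subgraph.verts_bot, Set.mem_empty_iff_false] at hv
    · simp [Set.range_eq_empty]
    · have hn0 : n = 0 := by rw [← hn]; exact Fintype.card_eq_zero
      simp [hn0, SimpleGraph.Subgraph.edgeSet_bot]
  · obtain ⟨a⟩ := hNE
    obtain ⟨b, hBab, hunit⟩ := jacobi hsk hu a
    have hba : a ≠ b := by
      intro h
      exact hBab (h ▸ skew_diag_s7 hsk a)
    have hn2 : 2 ≤ n := by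
      rw [← hn]
      have : Nontrivial ι := ⟨a, b, hba⟩
      exact Fintype.one_lt_card
    set ι' := {k : ι // k ≠ a ∧ k ≠ b} with hι'
    have hcard' : Fintype.card ι' = n - 2 := by
      rw [Fintype.card_subtype]
      have hfe : Finset.filter (fun k => k ≠ a ∧ k ≠ b) Finset.univ
          = (Finset.univ.erase a).erase b := by
        ext k
        simp only [Finset.mem_filter, Finset.mem_univ, true_and, Finset.mem_erase]
        tauto
      rw [hfe, Finset.card_erase_of_mem (Finset.mem_erase.mpr ⟨hba.symm, Finset.mem_univ b⟩),
        Finset.card_erase_of_mem (Finset.mem_univ a), Finset.card_univ, hn]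
      omega
    set f' : ι' → V := fun x => f ↑x with hf'def
    have hf'inj : Function.Injective f' := hf.comp Subtype.val_injective
    set B' := B.submatrix ((↑) : ι' → ι) ((↑) : ι' → ι) with hB'
    have hsk' : B'ᵀ = -B' := by
      ext x y
      have := congrFun (congrFun hsk (x : ι)) (y : ι)
      simpa [hB', Matrix.transpose_apply] using this
    have hsupp' : ∀ x y : ι', B' x y ≠ 0 → G.Adj (f' x) (f' y) := by
      intro x y hxy
      exact hsupp _ _ hxy
    obtain ⟨M', hM'match, hM'verts, hM'count⟩ :=
      IH (n - 2) (by omega) ι' hcard' f' hf'inj B' hsk' hsupp' hunit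
    have hGadj : G.Adj (f a) (f b) := hsupp a b hBab
    set e := G.subgraphOfAdj hGadj with he
    have hnotin : ∀ k : ι', f ↑k ≠ f a ∧ f ↑k ≠ f b := by
      intro k
      exact ⟨fun h => k.2.1 (hf h), fun h => k.2.2 (hf h)⟩
    have hdisj : Disjoint M'.support e.support := by
      rw [Set.disjoint_left]
      intro x hx1 hx2
      have hx1' : x ∈ M'.verts := M'.support_subset_verts hx1
      rw [hM'verts] at hx1'
      obtain ⟨k, rfl⟩ := hx1'
      have hx2' : f' k ∈ e.verts := e.support_subset_verts hx2
      rw [he] at hx2'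
      simp only [SimpleGraph.subgraphOfAdj_verts, Set.mem_insert_iff,
        Set.mem_singleton_iff] at hx2'
      rcases hx2' with h | h
      · exact (hnotin k).1 h
      · exact (hnotin k).2 h
    refine ⟨M' ⊔ e, hM'match.sup (SimpleGraph.Subgraph.IsMatching.subgraphOfAdj hGadj) hdisj,
      ?_, ?_⟩
    · rw [SimpleGraph.Subgraph.verts_sup, hM'verts, he]
      simp only [SimpleGraph.subgraphOfAdj_verts]
      ext x
      simp only [Set.mem_union, Set.mem_range, Set.mem_insert_iff, Set.mem_singleton_iff]
      constructor
      · rintro (⟨k, rfl⟩ | h | h)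
        · exact ⟨↑k, rfl⟩
        · exact ⟨a, h.symm⟩
        · exact ⟨b, h.symm⟩
      · rintro ⟨k, rfl⟩
        by_cases hka : k = a
        · exact Or.inr (Or.inl (by rw [hka]))
        · by_cases hkb : k = b
          · exact Or.inr (Or.inr (by rw [hkb]))
          · exact Or.inl ⟨⟨k, hka, hkb⟩, rfl⟩
    · rw [SimpleGraph.Subgraph.edgeSet_sup, he, SimpleGraph.edgeSet_subgraphOfAdj]
      have hnotmem : s(f a, f b) ∉ M'.edgeSet := by
        intro hmem
        have hadj : M'.Adj (f a) (f b) := SimpleGraph.Subgraph.mem_edgeSet.mp hmem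
        have : f a ∈ M'.verts := M'.edge_vert hadj
        rw [hM'verts] at this
        obtain ⟨k, hk⟩ := this
        exact (hnotin k).1 hk
      rw [Set.ncard_union_eq (by simpa using hnotmem) (Set.toFinite _) (Set.toFinite _)]
      rw [Set.ncard_singleton]
      omega

-- counting lemma L7
lemma matching_count {G : SimpleGraph V} {M : G.Subgraph} (hM : M.IsMatching) :
    M.verts.ncard = 2 * M.edgeSet.ncard := by
  classical
  have hvfin : M.verts.Finite := Set.toFinite _
  have hefin : M.edgeSet.Finite := Set.toFinite _
  set vs := hvfin.toFinset with hvs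
  set es := hefin.toFinset with hes
  set f : V → Sym2 V := fun v =>
    if h : v ∈ M.verts then ((hM.toEdge ⟨v, h⟩ : M.edgeSet) : Sym2 V) else s(v, v) with hfdef
  have hmem : ∀ v ∈ vs, f v ∈ es := by
    intro v hv
    rw [hvs, Set.Finite.mem_toFinset] at hv
    rw [hes, Set.Finite.mem_toFinset, hfdef]
    simp only [hv, dif_pos]
    exact (hM.toEdge ⟨v, hv⟩).2
  have hcard := Finset.card_eq_sum_card_fiberwise hmem
  have hfiber : ∀ e ∈ es, (vs.filter (fun v => f v = e)).card = 2 := by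
    intro e he
    rw [hes, Set.Finite.mem_toFinset] at he
    induction e with
    | _ x y =>
      have hadj : M.Adj x y := SimpleGraph.Subgraph.mem_edgeSet.mp he
      have hxy : x ≠ y := (M.adj_sub hadj).ne
      have hxv : x ∈ M.verts := M.edge_vert hadj
      have hyv : y ∈ M.verts := M.edge_vert hadj.symm
      have hfx : f x = s(x, y) := by
        rw [hfdef]
        simp only [hxv, dif_pos]
        rw [hM.toEdge_eq_of_adj hadj]
      have hfy : f y = s(x, y) := by
        rw [hfdef]
        simp only [hyv, dif_pos]
        rw [hM.toEdge_eq_of_adj hadj.symm]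
        exact Sym2.eq_swap
      have hflt : vs.filter (fun v => f v = s(x, y)) = {x, y} := by
        ext v
        simp only [Finset.mem_filter, Finset.mem_insert, Finset.mem_singleton, hvs,
          Set.Finite.mem_toFinset]
        constructor
        · rintro ⟨hv, hfv⟩
          rw [hfdef] at hfv
          simp only [hv, dif_pos] at hfv
          obtain ⟨w, hw1, -⟩ := hM hv
          rw [hM.toEdge_eq_of_adj hw1] at hfv
          simp only at hfv
          have hvmem : v ∈ s(x, y) := by
            rw [← hfv]
            exact Sym2.mem_mk_left _ _
          rwa [Sym2.mem_iff] at hvmem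
        · rintro (rfl | rfl)
          · exact ⟨hxv, hfx⟩
          · exact ⟨hyv, hfy⟩
      rw [hflt, Finset.card_insert_of_notMem (by simpa using hxy), Finset.card_singleton]
  rw [Set.ncard_eq_toFinset_card _ hvfin, Set.ncard_eq_toFinset_card _ hefin]
  rw [← hvs, ← hes, hcard, Finset.sum_congr rfl hfiber, Finset.sum_const, smul_eq_mul]
  ring

lemma matchSet_bddAbove (G : SimpleGraph V) :
    BddAbove {k | ∃ M : G.Subgraph, M.IsMatching ∧ M.edgeSet.ncard = k} := by
  refine ⟨Fintype.card (Sym2 V), ?_⟩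
  rintro k ⟨M, -, rfl⟩
  calc M.edgeSet.ncard ≤ (Set.univ : Set (Sym2 V)).ncard :=
        Set.ncard_le_ncard (Set.subset_univ _) Set.finite_univ
    _ = Fintype.card (Sym2 V) := by rw [Set.ncard_univ, Nat.card_eq_fintype_card]

lemma rank_le_twice_matchNum (G : SimpleGraph V) (A : Matrix V V ℝ) (hsk : Aᵀ = -A)
    (hgr : ∀ i j : V, i ≠ j → (A i j ≠ 0 ↔ G.Adj i j)) :
    A.rank ≤ 2 * matchNum G := by
  obtain ⟨S, hScard, hSunit⟩ := exists_principal A hsk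
  set B := A.submatrix ((↑) : S → V) ((↑) : S → V) with hB
  have hsk' : Bᵀ = -B := by
    ext x y
    have := congrFun (congrFun hsk (x : V)) (y : V)
    simpa [hB, Matrix.transpose_apply] using this
  have hsupp : ∀ a b : S, B a b ≠ 0 → G.Adj ↑a ↑b := by
    intro a b hab
    by_cases h : (a : V) = (b : V)
    · exfalso
      apply hab
      rw [hB]
      simp only [Matrix.submatrix_apply]
      rw [h]
      exact skew_diag_s7 hsk _
    · exact (hgr _ _ h).mp hab
  obtain ⟨M, hMmatch, -, hMcount⟩ := matching_of_unit G S.card S (Fintype.card_coe S)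
    _ Subtype.val_injective B hsk' hsupp hSunit
  have hle : M.edgeSet.ncard ≤ matchNum G :=
    le_csSup (matchSet_bddAbove G) ⟨M, hMmatch, rfl⟩
  omega

lemma exists_max_matching (G : SimpleGraph V) :
    ∃ M : G.Subgraph, M.IsMatching ∧ M.edgeSet.ncard = matchNum G := by
  have hne : {k | ∃ M : G.Subgraph, M.IsMatching ∧ M.edgeSet.ncard = k}.Nonempty := by
    refine ⟨0, ⊥, ?_, by simp [SimpleGraph.Subgraph.edgeSet_bot]⟩
    intro v hv
    simp only [SimpleGraph.Subgraph.verts_bot, Set.mem_empty_iff_false] at hv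
  have := Nat.sSup_mem hne (matchSet_bddAbove G)
  exact this

lemma exists_good_matrix (G : SimpleGraph V) :
    ∃ A : Matrix V V ℝ, Aᵀ = -A ∧ (∀ i j : V, i ≠ j → (A i j ≠ 0 ↔ G.Adj i j)) ∧
      2 * matchNum G ≤ A.rank := by
  classical
  obtain ⟨M, hM, hMcard⟩ := exists_max_matching G
  set φ := Fintype.equivFin V with hφ
  set s : V → V → ℝ := fun i j => if φ i < φ j then 1 else -1 with hs
  have hs_anti : ∀ i j : V, i ≠ j → s j i = -s i j := by
    intro i j hij
    have hφne : φ i ≠ φ j := fun h => hij (φ.injective h)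
    rcases lt_or_gt_of_ne hφne with h | h
    · simp [hs, h, not_lt.mpr h.le, asymm h]
    · simp [hs, h, not_lt.mpr h.le, asymm h]
  have hs_ne : ∀ i j : V, s i j ≠ 0 := by
    intro i j
    by_cases h : φ i < φ j <;> simp [hs, h]
  set Amat : ℝ → Matrix V V ℝ := fun ε => Matrix.of fun i j =>
    if M.Adj i j then s i j else if G.Adj i j then ε * s i j else 0 with hAmat
  have hMsub : ∀ {i j : V}, M.Adj i j → G.Adj i j := fun h => M.adj_sub h
  have hskew : ∀ ε, (Amat ε)ᵀ = -(Amat ε) := by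
    intro ε
    ext i j
    simp only [Matrix.transpose_apply, Matrix.neg_apply, hAmat, Matrix.of_apply]
    by_cases hij : i = j
    · subst hij
      have : ¬ M.Adj i i := fun h => (hMsub h).ne rfl
      have h2 : ¬ G.Adj i i := G.irrefl
      simp [this, h2]
    · by_cases h1 : M.Adj i j
      · rw [if_pos h1.symm, if_pos h1, hs_anti i j hij]
      · by_cases h2 : G.Adj i j
        · rw [if_neg (fun h => h1 h.symm), if_pos h2.symm, if_neg h1, if_pos h2,
            hs_anti i j hij]
          ring
        · rw [if_neg (fun h => h1 h.symm), if_neg (fun h => h2 h.symm), if_neg h1, if_neg h2,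
            neg_zero]
  have hgraph : ∀ ε : ℝ, ε ≠ 0 → ∀ i j : V, i ≠ j → ((Amat ε) i j ≠ 0 ↔ G.Adj i j) := by
    intro ε hε i j hij
    simp only [hAmat, Matrix.of_apply]
    by_cases h1 : M.Adj i j
    · simp [h1, hs_ne i j, hMsub h1]
    · by_cases h2 : G.Adj i j
      · simp [h1, h2, hε, hs_ne i j]
      · simp [h1, h2]
  -- the vertex set of the matching
  have hvfin : M.verts.Finite := Set.toFinite _
  set S : Finset V := hvfin.toFinset with hS
  have hmemS : ∀ v : V, v ∈ S ↔ v ∈ M.verts := fun v => Set.Finite.mem_toFinset hvfin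
  -- the matching involution on S
  have hpart : ∀ v : S, ∃ w : S, M.Adj ↑v ↑w := by
    intro v
    obtain ⟨w, hw, -⟩ := hM ((hmemS ↑v).mp v.2)
    exact ⟨⟨w, (hmemS w).mpr (M.edge_vert hw.symm)⟩, hw⟩
  set p : S → S := fun v => (hpart v).choose with hpdef
  have hp : ∀ v : S, M.Adj ↑v ↑(p v) := fun v => (hpart v).choose_spec
  have huniq : ∀ (v : S) (w : V), M.Adj ↑v w → w = ↑(p v) := by
    intro v w hw
    obtain ⟨w', hw', huniq⟩ := hM ((hmemS ↑v).mp v.2)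
    rw [huniq w hw, huniq ↑(p v) (hp v)]
  have hpinv : Function.Involutive p := by
    intro v
    have := huniq (p v) ↑v (hp v).symm
    exact Subtype.ext this.symm
  have hpne : ∀ v : S, p v ≠ v := by
    intro v h
    have := hp v
    rw [h] at this
    exact (hMsub this).ne rfl
  set σ : Equiv.Perm S := hpinv.toPerm p with hσ
  -- the base matrix
  have hB0 : (Amat 0).submatrix ((↑) : S → V) ((↑) : S → V)
      = Matrix.diagonal (fun v : S => s ↑v ↑(p v)) * (σ.permMatrix ℝ) := by
    ext v w
    rw [Matrix.diagonal_mul]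
    simp only [Matrix.submatrix_apply, hAmat, Matrix.of_apply, Equiv.Perm.permMatrix,
      PEquiv.toMatrix_apply, Equiv.toPEquiv_apply, Option.mem_def, Option.some.injEq]
    have hadj_iff : M.Adj ↑v ↑w ↔ w = p v := by
      constructor
      · intro h; exact Subtype.ext (huniq v ↑w h)
      · rintro rfl; exact hp v
    by_cases h : M.Adj ↑v ↑w
    · have hw : w = p v := hadj_iff.mp h
      subst hw
      simp [h, hσ, Involutive.toPerm]
    · have hw : ¬ (w = p v) := fun hh => h (hadj_iff.mpr hh)
      have : ¬ (σ v = w) := by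
        rw [hσ]
        simp only [Involutive.toPerm]
        intro hh
        exact hw (by rw [← hh]; rfl)
      simp only [h, if_false, this, if_false, mul_zero]
      split_ifs with h2
      · simp
      · simp
  have hB0det : ((Amat 0).submatrix ((↑) : S → V) ((↑) : S → V)).det ≠ 0 := by
    rw [hB0, Matrix.det_mul, Matrix.det_diagonal, Matrix.det_permutation]
    apply mul_ne_zero
    · exact Finset.prod_ne_zero_iff.mpr fun v _ => hs_ne _ _
    · rcases Int.units_eq_one_or (Equiv.Perm.sign σ) with h | h <;> simp [h]
  -- continuity
  have hcont : Continuous fun ε : ℝ => ((Amat ε).submatrix ((↑) : S → V) ((↑) : S → V)).det := by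
    apply Continuous.matrix_det
    apply continuous_matrix
    intro i j
    simp only [Matrix.submatrix_apply, hAmat, Matrix.of_apply]
    by_cases h1 : M.Adj ↑i ↑j
    · simpa [h1] using continuous_const
    · by_cases h2 : G.Adj ↑i ↑j
      · simp only [h1, if_false, h2, if_true]
        exact continuous_id.mul continuous_const
      · simpa [h1, h2] using continuous_const
  have hev : ∀ᶠ ε in nhds (0 : ℝ),
      ((Amat ε).submatrix ((↑) : S → V) ((↑) : S → V)).det ≠ 0 :=
    hcont.continuousAt.eventually_ne hB0det
  haveI : Filter.NeBot (nhdsWithin (0 : ℝ) {(0:ℝ)}ᶜ) := NormedField.nhdsNE_neBot (0 : ℝ)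
  have hev' : ∀ᶠ ε in nhdsWithin (0 : ℝ) {(0:ℝ)}ᶜ,
      ((Amat ε).submatrix ((↑) : S → V) ((↑) : S → V)).det ≠ 0 ∧ ε ∈ ({(0:ℝ)}ᶜ : Set ℝ) :=
    (hev.filter_mono nhdsWithin_le_nhds).and (eventually_mem_nhdsWithin)
  obtain ⟨ε, hdet, hεmem⟩ := hev'.exists
  have hεne : ε ≠ 0 := by simpa using hεmem
  refine ⟨Amat ε, hskew ε, hgraph ε hεne, ?_⟩
  have hrank2 : ((Amat ε).submatrix ((↑) : S → V) ((↑) : S → V)).rank = S.card := by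
    rw [Matrix.rank_of_isUnit _ ((Matrix.isUnit_iff_isUnit_det _).mpr
      (isUnit_iff_ne_zero.mpr hdet)), Fintype.card_coe]
  have hcardS : S.card = 2 * matchNum G := by
    rw [← hMcard, ← matching_count hM, Set.ncard_eq_toFinset_card _ hvfin]
  calc 2 * matchNum G = S.card := hcardS.symm
    _ = ((Amat ε).submatrix ((↑) : S → V) ((↑) : S → V)).rank := hrank2.symm
    _ ≤ (Amat ε).rank := rank_submatrix_le' _ _ _

end GraphPart

end Aux

/-- The maximum skew rank of a graph equals twice its matching number. -/
theorem maxSkewRank_eq_two_mul_matchNum {V : Type*} [Fintype V] [DecidableEq V]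
    (G : SimpleGraph V) : maxSkewRank G = 2 * matchNum G := by
  classical
  obtain ⟨A, hsk, hgr, hge⟩ := exists_good_matrix G
  have hub : ∀ r ∈ {r | ∃ A : Matrix V V ℝ, Aᵀ = -A ∧
      (∀ i j : V, i ≠ j → (A i j ≠ 0 ↔ G.Adj i j)) ∧ A.rank = r}, r ≤ 2 * matchNum G := by
    rintro r ⟨A', h1, h2, rfl⟩
    exact rank_le_twice_matchNum G A' h1 h2
  have hAeq : A.rank = 2 * matchNum G :=
    le_antisymm (rank_le_twice_matchNum G A hsk hgr) hge
  have hmem : 2 * matchNum G ∈ {r | ∃ A : Matrix V V ℝ, Aᵀ = -A ∧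
      (∀ i j : V, i ≠ j → (A i j ≠ 0 ↔ G.Adj i j)) ∧ A.rank = r} := ⟨A, hsk, hgr, hAeq⟩
  have hbdd : BddAbove {r | ∃ A : Matrix V V ℝ, Aᵀ = -A ∧
      (∀ i j : V, i ≠ j → (A i j ≠ 0 ↔ G.Adj i j)) ∧ A.rank = r} := by
    refine ⟨Fintype.card V, ?_⟩
    rintro r ⟨A', -, -, rfl⟩
    exact Matrix.rank_le_card_width A'
  apply le_antisymm
  · exact csSup_le ⟨_, hmem⟩ hub
  · exact le_csSup hbdd hmem
end

section
/- Every matrix in S⁻(G) has rank at most 2·match(G); equivalently, every real skew-symmetric matrix whose graph is G has at most 2·match(G) nonzero eigenvalues. -/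
set_option maxRecDepth 8000

open Matrix Equiv Equiv.Perm Finset List

namespace SkewAux



variable {m : Type*} [Fintype m] [DecidableEq m]

theorem exists_pairing (σ : Equiv.Perm m) (hfpf : ∀ x, σ x ≠ x)
    (heven : ∀ x : m, Even ((σ.cycleOf x).support.card)) :
    ∃ τ : m → m, Function.Involutive τ ∧ ∀ x, τ x ≠ x ∧ (τ x = σ x ∨ τ x = σ⁻¹ x) := by
  classical
  letI : LinearOrder m := LinearOrder.lift' (Fintype.equivFin m) (Equiv.injective _)
  have hmem : ∀ x : m, x ∈ σ.support := fun x => Equiv.Perm.mem_support.mpr (hfpf x)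
  have hne : ∀ x : m, ((σ.cycleOf x).support).Nonempty := fun x =>
    ⟨x, Equiv.Perm.mem_support_cycleOf_iff.mpr ⟨Equiv.Perm.SameCycle.refl _ _, hmem x⟩⟩
  set μ : m → m := fun x => ((σ.cycleOf x).support).min' (hne x) with hμ
  have hμ_same : ∀ x, σ.SameCycle x (μ x) := by
    intro x
    have := Finset.min'_mem _ (hne x)
    exact (Equiv.Perm.mem_support_cycleOf_iff.mp this).1
  have hμ_cyc : ∀ x, σ.cycleOf (μ x) = σ.cycleOf x := fun x =>
    ((hμ_same x).cycleOf_eq).symm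
  have hμ_apply : ∀ x, μ (σ x) = μ x := by
    intro x
    show ((σ.cycleOf (σ x)).support).min' _ = ((σ.cycleOf x).support).min' _
    congr 1 <;> rw [Equiv.Perm.cycleOf_self_apply]
  have hμ_apply_inv : ∀ x, μ (σ⁻¹ x) = μ x := by
    intro x
    conv_rhs => rw [show x = σ (σ⁻¹ x) by simp]
    rw [hμ_apply]
  set idx : m → ℕ := fun x => (σ.toList (μ x)).idxOf x with hidx
  have hmem_list : ∀ x, x ∈ σ.toList (μ x) := by
    intro x
    rw [Equiv.Perm.mem_toList_iff]
    exact ⟨(hμ_same x).symm, hmem (μ x)⟩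
  have hlen : ∀ x, (σ.toList (μ x)).length = (σ.cycleOf x).support.card := by
    intro x; rw [Equiv.Perm.length_toList, hμ_cyc]
  have hidx_lt : ∀ x, idx x < (σ.toList (μ x)).length := fun x =>
    List.idxOf_lt_length_iff.mpr (hmem_list x)
  have hget : ∀ x (n : ℕ) (hn : n < (σ.toList (μ x)).length),
      (σ.toList (μ x)).get ⟨n, hn⟩ = (σ ^ n) (μ x) := fun x n hn =>
    by rw [List.get_eq_getElem]; exact Equiv.Perm.getElem_toList ..
  have hx_eq : ∀ x, (σ ^ (idx x)) (μ x) = x := by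
    intro x
    rw [← hget x (idx x) (hidx_lt x)]
    exact List.idxOf_get _
  have hstep : ∀ x, Even (idx x) → idx (σ x) = idx x + 1 := by
    intro x hev
    have hlt : idx x + 1 < (σ.toList (μ x)).length := by
      rcases Nat.lt_or_ge (idx x + 1) (σ.toList (μ x)).length with h | h
      · exact h
      · exfalso
        have h1 : idx x + 1 = (σ.toList (μ x)).length :=
          le_antisymm (hidx_lt x) h
        have h2 : Even ((σ.toList (μ x)).length) := by rw [hlen]; exact heven x
        rw [← h1, Nat.even_add_one] at h2
        exact h2 hev
    have hg : (σ.toList (μ x))[idx x + 1] = σ x := by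
      have hg2 := hget x (idx x + 1) hlt
      simp only [List.get_eq_getElem] at hg2
      rw [hg2, pow_succ']
      simp only [Equiv.Perm.mul_apply]
      rw [hx_eq x]
    have h3 : List.idxOf (σ x) (σ.toList (μ x)) = idx x + 1 := by
      rw [← hg]
      exact (Equiv.Perm.nodup_toList _ _).idxOf_getElem _ _
    show (σ.toList (μ (σ x))).idxOf (σ x) = (σ.toList (μ x)).idxOf x + 1
    rw [hμ_apply x]
    exact h3
  have hstep' : ∀ x, ¬ Even (idx x) → idx (σ⁻¹ x) = idx x - 1 := by
    intro x hodd
    have h0 : idx x ≠ 0 := by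
      intro h; rw [h] at hodd; exact hodd Even.zero
    have hlt : idx x - 1 < (σ.toList (μ x)).length :=
      lt_of_le_of_lt (Nat.sub_le _ _) (hidx_lt x)
    have hkey : (σ.toList (μ x))[idx x - 1] = σ⁻¹ x := by
      have hg := hget x (idx x - 1) hlt
      simp only [List.get_eq_getElem] at hg
      rw [hg]
      apply Equiv.injective σ
      have h4 : σ ((σ ^ (idx x - 1)) (μ x)) = (σ ^ (idx x - 1 + 1)) (μ x) := by
        rw [pow_succ']; rfl
      rw [h4, Nat.sub_add_cancel (Nat.one_le_iff_ne_zero.mpr h0), hx_eq x,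
        (Equiv.Perm.inv_eq_iff_eq.mp (rfl : σ⁻¹ x = σ⁻¹ x)).symm]
    have h3 : List.idxOf (σ⁻¹ x) (σ.toList (μ x)) = idx x - 1 := by
      rw [← hkey]
      exact (Equiv.Perm.nodup_toList _ _).idxOf_getElem _ _
    show (σ.toList (μ (σ⁻¹ x))).idxOf (σ⁻¹ x) = (σ.toList (μ x)).idxOf x - 1
    rw [hμ_apply_inv x]
    exact h3
  refine ⟨fun x => if Even (idx x) then σ x else σ⁻¹ x, ?_, ?_⟩
  · intro x
    beta_reduce
    by_cases hev : Even (idx x)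
    · rw [if_pos hev]
      have h1 : idx (σ x) = idx x + 1 := hstep x hev
      have h2 : ¬ Even (idx (σ x)) := by
        rw [h1, Nat.even_add_one]; exact fun h => h hev
      rw [if_neg h2]; simp
    · rw [if_neg hev]
      have h1 : idx (σ⁻¹ x) = idx x - 1 := hstep' x hev
      have h2 : Even (idx (σ⁻¹ x)) := by
        rw [h1]
        rw [Nat.even_iff] at hev ⊢
        omega
      rw [if_pos h2]; simp
  · intro x
    beta_reduce
    by_cases hev : Even (idx x)
    · rw [if_pos hev]; exact ⟨hfpf x, Or.inl rfl⟩
    · rw [if_neg hev]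
      refine ⟨?_, Or.inr rfl⟩
      intro h
      exact hfpf x ((congrArg σ h).symm.trans ((Equiv.Perm.inv_eq_iff_eq.mp (rfl : σ⁻¹ x = σ⁻¹ x)).symm))




variable {m : Type*} [Fintype m] [DecidableEq m]

section Flip

variable {F : Type*} [Field F]

/-- Basic facts about reversing one cycle of a permutation. -/
theorem flip_facts (σ : Equiv.Perm m) (a : m) (ha : σ a ≠ a) :
    let c := σ.cycleOf a
    let σ' := σ * c⁻¹ * c⁻¹
    (∀ x ∉ c.support, σ' x = σ x) ∧ (∀ x ∈ c.support, σ' x = c⁻¹ x) ∧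
      (∀ x ∉ c.support, σ'.cycleOf x = σ.cycleOf x) ∧
      (∀ x ∈ c.support, σ'.cycleOf x = c⁻¹) ∧
      Equiv.Perm.sign σ' = Equiv.Perm.sign σ := by
  intro c σ'
  classical
  have hc_apply : ∀ y ∈ c.support, c y = σ y := by
    intro y hy
    exact Equiv.Perm.SameCycle.cycleOf_apply (Equiv.Perm.mem_support_cycleOf_iff.mp hy).1
  have hinv_mem : ∀ x ∈ c.support, c⁻¹ x ∈ c.support := by
    intro x hx
    rw [← Equiv.Perm.support_inv] at hx ⊢
    exact Equiv.Perm.apply_mem_support.mpr hx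
  set d : Equiv.Perm m := σ * c⁻¹ with hd
  have hd_mem : ∀ x ∈ c.support, d x = x := by
    intro x hx
    have h1 : c (c⁻¹ x) = σ (c⁻¹ x) := hc_apply _ (hinv_mem x hx)
    show σ (c⁻¹ x) = x
    rw [← h1]
    simp
  have hd_not : ∀ x ∉ c.support, d x = σ x := by
    intro x hx
    show σ (c⁻¹ x) = σ x
    rw [Equiv.Perm.notMem_support.mp (by rwa [Equiv.Perm.support_inv] : x ∉ c⁻¹.support)]
  have hdisj : d.Disjoint c⁻¹ := by
    intro x
    by_cases hx : x ∈ c.support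
    · exact Or.inl (hd_mem x hx)
    · exact Or.inr (Equiv.Perm.notMem_support.mp (by rwa [Equiv.Perm.support_inv]))
  have hdisj' : d.Disjoint c := by
    intro x
    by_cases hx : x ∈ c.support
    · exact Or.inl (hd_mem x hx)
    · exact Or.inr (Equiv.Perm.notMem_support.mp hx)
  have hσd : σ = d * c := by rw [hd]; group
  have hσ'd : σ' = d * c⁻¹ := by show σ * c⁻¹ * c⁻¹ = _; rw [hd]
  have h1 : ∀ x ∉ c.support, σ' x = σ x := by
    intro x hx
    rw [hσ'd]
    show d (c⁻¹ x) = σ x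
    rw [Equiv.Perm.notMem_support.mp (by rwa [Equiv.Perm.support_inv] : x ∉ c⁻¹.support)]
    exact hd_not x hx
  have h2 : ∀ x ∈ c.support, σ' x = c⁻¹ x := by
    intro x hx
    rw [hσ'd]
    show d (c⁻¹ x) = c⁻¹ x
    exact hd_mem _ (hinv_mem x hx)
  refine ⟨h1, h2, ?_, ?_, ?_⟩
  · intro x hx
    have e1 : σ'.cycleOf x = d.cycleOf x := by
      rw [hσ'd]
      exact Equiv.Perm.cycleOf_mul_of_apply_right_eq_self hdisj.commute x
        (Equiv.Perm.notMem_support.mp (by rwa [Equiv.Perm.support_inv]))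
    have e2 : σ.cycleOf x = d.cycleOf x := by
      rw [hσd]
      exact Equiv.Perm.cycleOf_mul_of_apply_right_eq_self hdisj'.commute x
        (Equiv.Perm.notMem_support.mp hx)
    rw [e1, e2]
  · intro x hx
    have e1 : σ'.cycleOf x = d.cycleOf x * (c⁻¹).cycleOf x := by
      rw [hσ'd]; exact hdisj.cycleOf_mul_distrib x
    have e2 : d.cycleOf x = 1 := (Equiv.Perm.cycleOf_eq_one_iff d).mpr (hd_mem x hx)
    have hcyc : c.IsCycle := Equiv.Perm.isCycle_cycleOf σ ha
    have e3 : (c⁻¹).cycleOf x = c⁻¹ := by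
      apply hcyc.inv.cycleOf_eq
      have : x ∈ (c⁻¹).support := by rwa [Equiv.Perm.support_inv]
      exact Equiv.Perm.mem_support.mp this
    rw [e1, e2, e3, one_mul]
  · rw [hσ'd, hσd]
    simp only [_root_.map_mul]
    congr 1
    simp

end Flip

section Main

variable {F : Type*} [Field F] [CharZero F]

theorem exists_even_perm_of_det_ne_zero (B : Matrix m m F)
    (hskew : Bᵀ = -B) (hdet : B.det ≠ 0) :
    ∃ σ : Equiv.Perm m, (∀ x, σ x ≠ x) ∧ (∀ x, Even ((σ.cycleOf x).support.card)) ∧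
      (∀ x, B (σ x) x ≠ 0) := by
  classical
  letI : LinearOrder m := LinearOrder.lift' (Fintype.equivFin m) (Equiv.injective _)
  have hBskew : ∀ i j, B i j = - B j i := fun i j => by
    have := congrFun (congrFun hskew j) i
    simpa [Matrix.transpose_apply, Matrix.neg_apply] using this
  have hdiag : ∀ i, B i i = 0 := fun i => by
    have h := hBskew i i
    have h2 : B i i + B i i = 0 := by linear_combination h
    have h3 : (2 : F) * B i i = 0 := by ring_nf; linear_combination h2
    rcases mul_eq_zero.mp h3 with h4 | h4
    · exact absurd h4 (by norm_num)
    · exact h4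
  rw [Matrix.det_apply] at hdet
  set f : Equiv.Perm m → F := fun σ => Equiv.Perm.sign σ • ∏ i, B (σ i) i with hf
  set O : Equiv.Perm m → Finset m :=
    fun σ => univ.filter (fun x => Odd ((σ.cycleOf x).support.card)) with hO
  set D : Finset (Equiv.Perm m) :=
    univ.filter (fun σ => ∀ x, Even ((σ.cycleOf x).support.card)) with hD
  have hOdd : ∀ σ ∈ Dᶜ, (O σ).Nonempty := by
    intro σ hσ
    rw [Finset.mem_compl, hD, Finset.mem_filter] at hσ
    push_neg at hσ
    obtain ⟨x, hx⟩ := hσ (Finset.mem_univ σ)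
    exact ⟨x, Finset.mem_filter.mpr ⟨Finset.mem_univ x, Nat.not_even_iff_odd.mp hx⟩⟩
  -- master step
  have master : ∀ σ, ∀ h : (O σ).Nonempty,
      let a := (O σ).min' h
      let c := σ.cycleOf a
      let σ' := σ * c⁻¹ * c⁻¹
      O σ' = O σ ∧ σ'.cycleOf a = c⁻¹ ∧ f σ + f σ' = 0 := by
    intro σ h a c σ'
    have ha_mem_O : a ∈ O σ := Finset.min'_mem _ h
    have hodd_a : Odd ((σ.cycleOf a).support.card) :=
      (Finset.mem_filter.mp ha_mem_O).2
    have ha : σ a ≠ a := by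
      intro hfix
      rw [(Equiv.Perm.cycleOf_eq_one_iff σ).mpr hfix] at hodd_a
      simp at hodd_a
    obtain ⟨h1, h2, h3, h4, h5⟩ := flip_facts σ a ha
    have ha_mem : a ∈ c.support :=
      Equiv.Perm.mem_support_cycleOf_iff.mpr
        ⟨Equiv.Perm.SameCycle.refl _ _, Equiv.Perm.mem_support.mpr ha⟩
    have hc_apply : ∀ y ∈ c.support, c y = σ y := by
      intro y hy
      exact Equiv.Perm.SameCycle.cycleOf_apply (Equiv.Perm.mem_support_cycleOf_iff.mp hy).1
    have hcyc_mem : ∀ x ∈ c.support, σ.cycleOf x = c := by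
      intro x hx
      exact ((Equiv.Perm.mem_support_cycleOf_iff.mp hx).1.cycleOf_eq).symm
    have hOeq : O σ' = O σ := by
      ext x
      simp only [hO, Finset.mem_filter, Finset.mem_univ, true_and]
      by_cases hx : x ∈ c.support
      · rw [h4 x hx, hcyc_mem x hx, Equiv.Perm.support_inv]
      · rw [h3 x hx]
    -- product flip
    have hprod : ∏ i, B (σ' i) i = - ∏ i, B (σ i) i := by
      rw [← Finset.prod_mul_prod_compl c.support (fun i => B (σ' i) i),
        ← Finset.prod_mul_prod_compl c.support (fun i => B (σ i) i)]
      have e1 : ∏ x ∈ c.supportᶜ, B (σ' x) x = ∏ x ∈ c.supportᶜ, B (σ x) x := by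
        apply Finset.prod_congr rfl
        intro x hx
        rw [h1 x (Finset.mem_compl.mp hx)]
      have e2 : ∏ x ∈ c.support, B (σ' x) x = - ∏ x ∈ c.support, B (σ x) x := by
        have s1 : ∏ x ∈ c.support, B (σ' x) x = ∏ x ∈ c.support, B (c⁻¹ x) x := by
          apply Finset.prod_congr rfl
          intro x hx; rw [h2 x hx]
        have s2 : ∏ x ∈ c.support, B (c⁻¹ x) x = ∏ y ∈ c.support, B y (c y) := by
          apply Finset.prod_bij' (fun x _ => c⁻¹ x) (fun y _ => c y)
          · intro x hx
            have hx' : x ∈ c⁻¹.support := by rwa [Equiv.Perm.support_inv]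
            have := Equiv.Perm.apply_mem_support.mpr hx'
            rwa [Equiv.Perm.support_inv] at this
          · intro y hy
            exact Equiv.Perm.apply_mem_support.mpr hy
          · intro x hx; simp
          · intro y hy; simp
          · intro x hx; simp
        have s3 : ∏ y ∈ c.support, B y (c y) = ∏ y ∈ c.support, -(B (c y) y) := by
          apply Finset.prod_congr rfl
          intro y hy; rw [hBskew]
        have s4 : ∏ y ∈ c.support, -(B (c y) y) = (-1) ^ c.support.card * ∏ y ∈ c.support, B (c y) y := by
          rw [← Finset.prod_const (-1 : F), ← Finset.prod_mul_distrib]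
          exact Finset.prod_congr rfl fun y _ => (neg_one_mul _).symm
        have s5 : ∏ y ∈ c.support, B (c y) y = ∏ y ∈ c.support, B (σ y) y := by
          apply Finset.prod_congr rfl
          intro y hy; rw [hc_apply y hy]
        rw [s1, s2, s3, s4, s5, hodd_a.neg_one_pow]
        ring
      rw [e1, e2]
      ring
    refine ⟨hOeq, h4 a ha_mem, ?_⟩
    show f σ + f σ' = 0
    rw [hf]
    simp only []
    rw [h5, hprod, smul_neg]
    ring
  -- total function version of the involution
  set Gt : Equiv.Perm m → Equiv.Perm m := fun σ =>
    if h : (O σ).Nonempty then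
      σ * (σ.cycleOf ((O σ).min' h))⁻¹ * (σ.cycleOf ((O σ).min' h))⁻¹
    else σ with hGt
  have hGt_eq : ∀ σ (h : (O σ).Nonempty),
      Gt σ = σ * (σ.cycleOf ((O σ).min' h))⁻¹ * (σ.cycleOf ((O σ).min' h))⁻¹ := by
    intro σ h
    rw [hGt]
    exact dif_pos h
  have hGO : ∀ σ (h : (O σ).Nonempty), O (Gt σ) = O σ := by
    intro σ h
    rw [hGt_eq σ h]
    exact (master σ h).1
  have hGsum : ∀ σ (h : (O σ).Nonempty), f σ + f (Gt σ) = 0 := by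
    intro σ h
    rw [hGt_eq σ h]
    exact (master σ h).2.2
  have hGinv : ∀ σ (h : (O σ).Nonempty), Gt (Gt σ) = σ := by
    intro σ h
    have h2 : (O (Gt σ)).Nonempty := by rw [hGO σ h]; exact h
    rw [hGt_eq _ h2]
    have hmin : (O (Gt σ)).min' h2 = (O σ).min' h := by
      congr 1
      exact hGO σ h
    rw [hmin]
    have hc2 : (Gt σ).cycleOf ((O σ).min' h) = (σ.cycleOf ((O σ).min' h))⁻¹ := by
      rw [hGt_eq σ h]
      exact (master σ h).2.1
    rw [hc2, hGt_eq σ h]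
    group
  have hmemc : ∀ σ, σ ∈ Dᶜ ↔ (O σ).Nonempty := by
    intro σ
    constructor
    · exact hOdd σ
    · intro ⟨x, hx⟩
      rw [Finset.mem_compl, hD, Finset.mem_filter]
      rw [hO, Finset.mem_filter] at hx
      intro hcon
      exact (Nat.not_even_iff_odd.mpr hx.2) (hcon.2 x)
  have hDc : ∑ σ ∈ Dᶜ, f σ = 0 := by
    apply Finset.sum_involution (fun σ _ => Gt σ)
    · intro σ hσ
      exact hGsum σ ((hmemc σ).mp hσ)
    · intro σ hσ hfσ
      intro heq
      have := hGsum σ ((hmemc σ).mp hσ)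
      rw [heq] at this
      have h2 : (2 : F) * f σ = 0 := by ring_nf; linear_combination this
      rcases mul_eq_zero.mp h2 with h4 | h4
      · exact absurd h4 (by norm_num)
      · exact hfσ h4
    · intro σ hσ
      rw [hmemc]
      rw [hGO σ ((hmemc σ).mp hσ)]
      exact (hmemc σ).mp hσ
    · intro σ hσ
      exact hGinv σ ((hmemc σ).mp hσ)
  have hsum_ne : ∑ σ ∈ D, f σ ≠ 0 := by
    intro h0
    apply hdet
    rw [← Finset.sum_add_sum_compl D f, h0, hDc, add_zero]
  obtain ⟨σ, hσD, hσne⟩ := Finset.exists_ne_zero_of_sum_ne_zero hsum_ne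
  have heven : ∀ x, Even ((σ.cycleOf x).support.card) := by
    rw [hD] at hσD
    exact (Finset.mem_filter.mp hσD).2
  have hprodne : ∏ i, B (σ i) i ≠ 0 := by
    intro h0
    apply hσne
    rw [hf]
    beta_reduce
    rw [h0, smul_zero]
  have hfac : ∀ x, B (σ x) x ≠ 0 := fun x =>
    Finset.prod_ne_zero_iff.mp hprodne x (Finset.mem_univ x)
  have hfpf : ∀ x, σ x ≠ x := by
    intro x hx
    apply hfac x
    rw [hx]
    exact hdiag x
  exact ⟨σ, hfpf, heven, hfac⟩

end Main




variable {V : Type*} [Fintype V] [DecidableEq V] {F : Type*} [Field F]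

theorem exists_principal (B : Matrix V V F) (hskew : Bᵀ = -B) :
    ∃ s : Finset V, s.card = B.rank ∧
      (B.submatrix ((↑) : s → V) ((↑) : s → V)).det ≠ 0 := by
  classical
  have hBskew : ∀ i j, B i j = - B j i := fun i j => by
    have := congrFun (congrFun hskew j) i
    simpa [Matrix.transpose_apply, Matrix.neg_apply] using this
  obtain ⟨b, hb_sub, hb_span, hb_ind⟩ := exists_linearIndependent F (Set.range Bᵀ)
  have hfin : b.Finite := (Set.finite_range _).subset hb_sub
  haveI : Fintype b := hfin.fintype
  -- choose column indices
  have hchoice : ∀ w : b, ∃ j : V, Bᵀ j = (w : V → F) := fun w => hb_sub w.2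
  choose fn hfn using hchoice
  have hfn_inj : Function.Injective fn := by
    intro w w' h
    have : (w : V → F) = (w' : V → F) := by rw [← hfn w, ← hfn w', h]
    exact Subtype.ext this
  set s : Finset V := Finset.univ.image fn with hs
  have hcard : s.card = Fintype.card b := by
    rw [hs, Finset.card_image_of_injective _ hfn_inj, Finset.card_univ]
  have hcardb : Fintype.card b = B.rank := by
    rw [Matrix.rank_eq_finrank_span_cols, show B.col = Bᵀ from rfl, ← hb_span]
    rw [finrank_span_set_eq_card hb_ind]
    simp [Set.toFinset_card]
  -- every column indexed by s is in b
  have hmem_s : ∀ j ∈ s, Bᵀ j ∈ b := by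
    intro j hj
    rw [hs, Finset.mem_image] at hj
    obtain ⟨w, _, rfl⟩ := hj
    rw [hfn w]
    exact w.2
  -- the columns indexed by s are linearly independent as a family on ↑s
  have hind_s : LinearIndependent F (fun x : ↑s => Bᵀ (x : V)) := by
    have hg : ∀ x : ↑s, Bᵀ (x : V) ∈ b := fun x => hmem_s _ x.2
    set g : ↑s → ↑b := fun x => ⟨Bᵀ (x : V), hg x⟩ with hgdef
    have hginj : Function.Injective g := by
      intro x x' h
      have h2 : Bᵀ (x : V) = Bᵀ (x' : V) := congrArg Subtype.val h
      -- both x, x' are of the form fn w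
      obtain ⟨w, _, hw⟩ := Finset.mem_image.mp (by rw [← hs]; exact x.2)
      obtain ⟨w', _, hw'⟩ := Finset.mem_image.mp (by rw [← hs]; exact x'.2)
      have e1 : Bᵀ (x : V) = (w : V → F) := by rw [← hw, hfn]
      have e2 : Bᵀ (x' : V) = (w' : V → F) := by rw [← hw', hfn]
      have : w = w' := Subtype.ext (by rw [← e1, ← e2, h2])
      apply Subtype.ext
      rw [← hw, ← hw', this]
    have : (fun x : ↑s => Bᵀ (x : V)) = (fun w : ↑b => (w : V → F)) ∘ g := by
      funext x; rfl
    rw [this]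
    exact hb_ind.comp g hginj
  refine ⟨s, by rw [hcard, hcardb], ?_⟩
  -- injectivity of the principal submatrix
  intro hdet0
  obtain ⟨x, hx0, hxv⟩ := Matrix.exists_mulVec_eq_zero_iff.mpr hdet0
  apply hx0
  -- extend x by zero
  set xb : V → F := fun v => if h : v ∈ s then x ⟨v, h⟩ else 0 with hxb
  -- dot products with columns in s vanish
  have stepA : ∀ j ∈ s, ∑ v, xb v * B v j = 0 := by
    intro j hj
    have e1 : ∑ v, xb v * B v j = ∑ v ∈ s, xb v * B v j := by
      rw [← Finset.sum_subset (Finset.subset_univ s)]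
      intro v _ hv
      rw [hxb]
      simp [hv]
    have e2 : ∑ v ∈ s, xb v * B v j = ∑ v : ↑s, x v * B (v : V) j := by
      rw [← Finset.sum_attach s (fun v => xb v * B v j)]
      apply Finset.sum_congr rfl
      intro v _
      rw [hxb]
      simp [v.2]
    have e3 : ∑ v : ↑s, x v * B (v : V) j = - ∑ v : ↑s, B j (v : V) * x v := by
      rw [← Finset.sum_neg_distrib]
      apply Finset.sum_congr rfl
      intro v _
      rw [hBskew (v : V) j]
      ring
    have e4 : ∑ v : ↑s, B j (v : V) * x v = 0 := by
      have := congrFun hxv ⟨j, hj⟩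
      simpa [Matrix.mulVec, dotProduct, Matrix.submatrix_apply] using this
    rw [e1, e2, e3, e4, neg_zero]
  -- dot products with everything in the span vanish
  have stepB : ∀ w ∈ Submodule.span F (Set.range Bᵀ), ∑ v, xb v * w v = 0 := by
    intro w hw
    rw [← hb_span] at hw
    induction hw using Submodule.span_induction with
    | mem w hwb =>
      -- w ∈ b, so w = Bᵀ j for some j ∈ s
      obtain ⟨ww, hww⟩ : ∃ ww : b, (ww : V → F) = w := ⟨⟨w, hwb⟩, rfl⟩
      have hjs : fn ww ∈ s := by rw [hs]; exact Finset.mem_image_of_mem fn (Finset.mem_univ _)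
      have := stepA (fn ww) hjs
      have e : ∀ v, B v (fn ww) = w v := by
        intro v
        rw [← hww, ← hfn ww]
        rfl
      rw [← hww, ← hfn ww]
      convert this using 2
      rfl
    | zero => simp
    | add u v _ _ hu hv => simp [Pi.add_apply, mul_add, Finset.sum_add_distrib, hu, hv]
    | smul c u _ hu =>
      simp only [Pi.smul_apply, smul_eq_mul]
      have e : ∑ v, xb v * (c * u v) = c * ∑ v, xb v * u v := by
        rw [Finset.mul_sum]
        apply Finset.sum_congr rfl
        intro v _
        ring
      rw [e, hu, mul_zero]
  -- B *ᵥ xb = 0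
  have stepC : ∀ k, ∑ v, xb v * B v k = 0 := fun k =>
    stepB (Bᵀ k) (Submodule.subset_span (Set.mem_range_self k))
  -- conclude x = 0 by linear independence
  have stepD : ∑ v : ↑s, x v • (fun k => B k (v : V)) = (0 : V → F) := by
    funext k
    have e1 : (∑ v : ↑s, x v • (fun k => B k (v : V))) k = ∑ v : ↑s, x v * B k (v : V) := by
      simp [Finset.sum_apply]
    rw [e1]
    have e2 : ∑ v : ↑s, x v * B k (v : V) = - ∑ v : ↑s, xb (v : V) * B (v : V) k := by
      rw [← Finset.sum_neg_distrib]
      apply Finset.sum_congr rfl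
      intro v _
      rw [hxb]
      simp only [v.2, dif_pos]
      rw [hBskew (v : V) k]
      ring
    rw [e2]
    have e3 : ∑ v : ↑s, xb (v : V) * B (v : V) k = ∑ v, xb v * B v k := by
      rw [Finset.sum_coe_sort s (fun v => xb v * B v k)]
      apply Finset.sum_subset (Finset.subset_univ s)
      intro v _ hv
      rw [hxb]; simp [hv]
    rw [e3, stepC k, neg_zero]
    simp
  funext v
  exact Fintype.linearIndependent_iff.mp hind_s (fun v => x v) stepD v


section RankMain

variable {V : Type*} [Fintype V] [DecidableEq V] {F : Type*} [Field F] [CharZero F]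

theorem rank_le_two_mul_matchNum (G : SimpleGraph V) (B : Matrix V V F)
    (hskew : Bᵀ = -B) (hsupp : ∀ i j : V, i ≠ j → (B i j ≠ 0 ↔ G.Adj i j)) :
    B.rank ≤ 2 * matchNum G := by
  classical
  obtain ⟨t, hcard, hdet⟩ := exists_principal B hskew
  set Bs : Matrix ↑t ↑t F := B.submatrix ((↑) : t → V) ((↑) : t → V) with hBs
  have hBsskew : Bsᵀ = -Bs := by
    funext i j
    have := congrFun (congrFun hskew (i : V)) (j : V)
    simpa [hBs, Matrix.transpose_apply, Matrix.neg_apply] using this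
  obtain ⟨σ, hfpf, heven, hfac⟩ := exists_even_perm_of_det_ne_zero Bs hBsskew hdet
  obtain ⟨τ, hτinv, hτ⟩ := exists_pairing σ hfpf heven
  -- nonzero entries at pairs
  have hpair_ne : ∀ x : ↑t, Bs x (τ x) ≠ 0 := by
    intro x
    rcases (hτ x).2 with h | h
    · rw [h]
      intro h0
      apply hfac x
      have := congrFun (congrFun hBsskew (σ x)) x
      simp only [Matrix.transpose_apply, Matrix.neg_apply] at this
      rw [this] at h0
      exact neg_eq_zero.mp h0
    · rw [h]
      have := hfac (σ⁻¹ x)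
      rwa [(Equiv.Perm.inv_eq_iff_eq.mp (rfl : σ⁻¹ x = σ⁻¹ x)).symm] at this
  have hpair_graph : ∀ x : ↑t, G.Adj (x : V) ((τ x : ↑t) : V) := by
    intro x
    have hne : (x : V) ≠ ((τ x : ↑t) : V) := by
      intro h
      exact (hτ x).1 (Subtype.ext h).symm
    exact (hsupp _ _ hne).mp (hpair_ne x)
  -- build the matching subgraph
  set M : G.Subgraph :=
    { verts := ↑t
      Adj := fun v w => ∃ (hv : v ∈ t) (hw : w ∈ t), (τ ⟨v, hv⟩ : V) = w
      adj_sub := by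
        rintro v w ⟨hv, hw, hvw⟩
        have := hpair_graph ⟨v, hv⟩
        rwa [hvw] at this
      edge_vert := by
        rintro v w ⟨hv, hw, hvw⟩
        exact hv
      symm := by
        constructor
        rintro v w ⟨hv, hw, hvw⟩
        refine ⟨hw, hv, ?_⟩
        have : (⟨w, hw⟩ : ↑t) = τ ⟨v, hv⟩ := Subtype.ext hvw.symm
        rw [this, hτinv ⟨v, hv⟩] } with hM
  have hmatch : M.IsMatching := by
    intro v hv
    have hvs : v ∈ t := hv
    refine ⟨(τ ⟨v, hvs⟩ : V), ⟨hvs, (τ ⟨v, hvs⟩).2, rfl⟩, ?_⟩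
    rintro y ⟨hv', hy, hvy⟩
    rw [← hvy]
  -- edge set as finite image
  set E : Finset (Sym2 V) := t.attach.image (fun x : ↑t => Sym2.mk (x : V) ((τ x : ↑t) : V)) with hE
  have hedge : M.edgeSet = ↑E := by
    apply Set.ext
    intro e
    refine Sym2.ind (fun v w => ?_) e
    rw [SimpleGraph.Subgraph.mem_edgeSet]
    constructor
    · rintro ⟨hv, hw, hvw⟩
      rw [Finset.mem_coe, hE, Finset.mem_image]
      exact ⟨⟨v, hv⟩, Finset.mem_attach _ _, by rw [hvw]⟩
    · intro he
      rw [Finset.mem_coe, hE, Finset.mem_image] at he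
      obtain ⟨x, _, hx⟩ := he
      rw [Sym2.eq_iff] at hx
      rcases hx with ⟨h1, h2⟩ | ⟨h1, h2⟩
      · subst h1; subst h2
        exact ⟨x.2, (τ x).2, by rw [Subtype.coe_eta]⟩
      · subst h1; subst h2
        exact ⟨(τ x).2, x.2, by rw [Subtype.coe_eta, hτinv x]⟩
  have hEcard : M.edgeSet.ncard = E.card := by rw [hedge, Set.ncard_coe_finset]
  -- matchNum is at least E.card
  have hbdd : BddAbove {k | ∃ M : G.Subgraph, M.IsMatching ∧ M.edgeSet.ncard = k} := by
    refine ⟨Fintype.card (Sym2 V), ?_⟩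
    rintro k ⟨N, _, rfl⟩
    calc N.edgeSet.ncard ≤ (Set.univ : Set (Sym2 V)).ncard :=
          Set.ncard_le_ncard (Set.subset_univ _) Set.finite_univ
      _ = Fintype.card (Sym2 V) := by rw [Set.ncard_univ, Nat.card_eq_fintype_card]
  have hmn : E.card ≤ matchNum G := le_csSup hbdd ⟨M, hmatch, hEcard⟩
  -- t.card ≤ 2 * E.card
  have hcard2 : t.card ≤ 2 * E.card := by
    have := Finset.card_le_mul_card_image (f := fun x : ↑t => Sym2.mk (x : V) ((τ x : ↑t) : V))
      t.attach 2 ?_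
    · rwa [Finset.card_attach] at this
    · intro e he
      rw [Finset.mem_image] at he
      obtain ⟨x, _, hx⟩ := he
      have hsub : Finset.filter (fun a : ↑t => Sym2.mk (a : V) ((τ a : ↑t) : V) = e) t.attach ⊆
          {x, τ x} := by
        intro y hy
        rw [Finset.mem_filter] at hy
        have hy2 := hy.2
        rw [← hx, Sym2.eq_iff] at hy2
        rcases hy2 with ⟨h1, h2⟩ | ⟨h1, h2⟩
        · exact Finset.mem_insert.mpr (Or.inl (Subtype.ext h1))
        · have : y = τ x := Subtype.ext h1
          exact Finset.mem_insert.mpr (Or.inr (by rw [this]; exact Finset.mem_singleton_self _))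
      calc (Finset.filter _ t.attach).card ≤ ({x, τ x} : Finset ↑t).card :=
            Finset.card_le_card hsub
        _ ≤ 2 := Finset.card_insert_le _ _ |>.trans (by simp)
  calc B.rank = t.card := hcard.symm
    _ ≤ 2 * E.card := hcard2
    _ ≤ 2 * matchNum G := by omega

end RankMain

end SkewAux

namespace SkewAux2

open Polynomial



variable {n : Type*} [Fintype n] [DecidableEq n] {R : Type*} [CommRing R]

theorem charpoly_conj (P M Q : Matrix n n R) (h1 : P * Q = 1) (h2 : Q * P = 1) :
    (P * M * Q).charpoly = M.charpoly := by
  have hcm : charmatrix (P * M * Q) =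
      P.map (C : R →+* R[X]) * charmatrix M * Q.map (C : R →+* R[X]) := by
    unfold charmatrix
    simp only [RingHom.mapMatrix_apply]
    rw [Matrix.mul_sub, Matrix.sub_mul]
    congr 1
    · have hc := (Matrix.scalar_commute (X : R[X]) (fun r' => Commute.all _ _)
        (P.map (C : R →+* R[X]))).eq
      rw [← hc, Matrix.mul_assoc, ← Matrix.map_mul, h1,
        Matrix.map_one _ (map_zero _) (map_one _), Matrix.mul_one]
    · rw [← Matrix.map_mul, ← Matrix.map_mul]
  rw [Matrix.charpoly, hcm, Matrix.det_mul, Matrix.det_mul, Matrix.charpoly]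
  have hd : ((P.map (C : R →+* R[X])).det) * ((Q.map (C : R →+* R[X])).det) = 1 := by
    rw [mul_comm, ← Matrix.det_mul, ← Matrix.map_mul, h2,
      Matrix.map_one _ (map_zero _) (map_one _), Matrix.det_one]
  calc ((P.map (C : R →+* R[X])).det) * (charmatrix M).det * ((Q.map (C : R →+* R[X])).det)
      = (((P.map (C : R →+* R[X])).det) * ((Q.map (C : R →+* R[X])).det)) * (charmatrix M).det := by
        ring
    _ = (charmatrix M).det := by rw [hd, one_mul]

theorem charpoly_diagonal (d : n → R) :
    (Matrix.diagonal d).charpoly = ∏ i, (X - C (d i)) := by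
  rw [Matrix.charpoly]
  have h : charmatrix (Matrix.diagonal d) = Matrix.diagonal (fun i => X - C (d i)) := by
    ext i j
    by_cases h : i = j
    · subst h; simp
    · rw [Matrix.charmatrix_apply_ne _ _ _ h, Matrix.diagonal_apply_ne _ h,
        Matrix.diagonal_apply_ne _ h]
      simp
  rw [h, Matrix.det_diagonal]

theorem roots_charpoly_diagonal [IsDomain R] (d : n → R) :
    (Matrix.diagonal d).charpoly.roots = Finset.univ.val.map d := by
  rw [charpoly_diagonal]
  have hne : ∀ i ∈ Finset.univ (α := n), (X - C (d i)) ≠ 0 := fun i _ =>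
    (Polynomial.monic_X_sub_C (d i)).ne_zero
  rw [Polynomial.roots_prod _ _ (Finset.prod_ne_zero_iff.mpr hne)]
  simp [Polynomial.roots_X_sub_C]


end SkewAux2

/-- Every real skew-symmetric matrix whose graph is `G` has rank at most
`2 · match(G)`; equivalently, it has at most `2 · match(G)` nonzero eigenvalues. -/
theorem skew_rank_le_two_mul_matchNum {V : Type*} [Fintype V] [DecidableEq V]
    (G : SimpleGraph V) (A : Matrix V V ℝ) (hskew : Aᵀ = -A)
    (hsupp : ∀ i j : V, i ≠ j → (A i j ≠ 0 ↔ G.Adj i j)) :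
    A.rank ≤ 2 * matchNum G ∧
      (((A.map Complex.ofReal).charpoly.roots).filter (· ≠ 0)).card ≤ 2 * matchNum G := by
  classical
  have hAskew : ∀ i j, A i j = - A j i := fun i j => by
    have := congrFun (congrFun hskew j) i
    simpa [Matrix.transpose_apply, Matrix.neg_apply] using this
  constructor
  · exact SkewAux.rank_le_two_mul_matchNum G A hskew hsupp
  · set B : Matrix V V ℂ := A.map Complex.ofReal with hB
    have hBskew : Bᵀ = -B := by
      funext i j
      simp only [hB, Matrix.transpose_apply, Matrix.map_apply, Matrix.neg_apply]
      rw [hAskew j i]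
      push_cast
      ring
    have hsuppB : ∀ i j : V, i ≠ j → (B i j ≠ 0 ↔ G.Adj i j) := by
      intro i j hij
      rw [← hsupp i j hij]
      simp [hB, Complex.ofReal_eq_zero]
    have hrankB : B.rank ≤ 2 * matchNum G :=
      SkewAux.rank_le_two_mul_matchNum G B hBskew hsuppB
    -- the Hermitian matrix i • B
    set H : Matrix V V ℂ := Complex.I • B with hH
    have hHerm : H.IsHermitian := by
      show Hᴴ = H
      funext i j
      simp only [hH, hB, Matrix.conjTranspose_apply, Matrix.smul_apply, Matrix.map_apply,
        smul_eq_mul, star_mul', Complex.star_def, Complex.conj_I, Complex.conj_ofReal]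
      rw [hAskew j i]
      push_cast
      ring
    have hBH : B = (-Complex.I) • H := by
      rw [hH, smul_smul]
      simp [Complex.I_mul_I]
    -- spectral theorem
    have hspec := hHerm.spectral_theorem
    set U : Matrix V V ℂ := (hHerm.eigenvectorUnitary : Matrix V V ℂ) with hU
    have hU1 : U * star U = 1 := (Matrix.mem_unitaryGroup_iff).mp hHerm.eigenvectorUnitary.2
    have hU2 : star U * U = 1 := (Matrix.mem_unitaryGroup_iff').mp hHerm.eigenvectorUnitary.2
    set d : V → ℂ := fun i => (-Complex.I) * (hHerm.eigenvalues i : ℂ) with hd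
    have hBconj : B = U * Matrix.diagonal d * star U := by
      rw [hBH, hspec, Unitary.conjStarAlgAut_apply]
      rw [← smul_mul_assoc, ← mul_smul_comm]
      congr 2
      funext i j
      by_cases h : i = j
      · subst h; simp [hd, Matrix.diagonal_apply_eq, Matrix.smul_apply]
      · simp [hd, Matrix.diagonal_apply_ne _ h, Matrix.smul_apply]
    have hcp : B.charpoly = (Matrix.diagonal d).charpoly := by
      rw [hBconj]
      exact SkewAux2.charpoly_conj U (Matrix.diagonal d) (star U) hU1 hU2
    have hroots : B.charpoly.roots = Finset.univ.val.map d := by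
      rw [hcp, SkewAux2.roots_charpoly_diagonal]
    -- count nonzero roots
    have hcount : ((B.charpoly.roots).filter (· ≠ 0)).card =
        (Finset.univ.filter (fun i => hHerm.eigenvalues i ≠ 0)).card := by
      rw [hroots, Multiset.filter_map]
      rw [Multiset.card_map]
      have : ∀ i : V, ((· ≠ 0) ∘ d) i ↔ hHerm.eigenvalues i ≠ 0 := by
        intro i
        simp only [Function.comp_apply, hd, ne_eq, mul_eq_zero, not_or]
        constructor
        · intro h
          intro h0
          exact h.2 (by rw [h0]; norm_num)
        · intro h
          refine ⟨by simp [Complex.I_ne_zero], by simpa [Complex.ofReal_eq_zero] using h⟩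
      rw [Multiset.filter_congr (fun i _ => this i)]
      rfl
    have hrankH : H.rank = (Finset.univ.filter (fun i => hHerm.eigenvalues i ≠ 0)).card := by
      rw [hHerm.rank_eq_card_non_zero_eigs]
      rw [Fintype.card_subtype]
    have hrankHB : H.rank = B.rank := by
      rw [hH, Matrix.smul_eq_diagonal_mul]
      apply Matrix.rank_mul_eq_right_of_isUnit_det
      rw [Matrix.det_diagonal, Finset.prod_const]
      exact isUnit_iff_ne_zero.mpr (pow_ne_zero _ Complex.I_ne_zero)
    calc ((B.charpoly.roots).filter (· ≠ 0)).card
        = (Finset.univ.filter (fun i => hHerm.eigenvalues i ≠ 0)).card := hcount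
      _ = H.rank := hrankH.symm
      _ = B.rank := hrankHB
      _ ≤ 2 * matchNum G := hrankB
end

section
/- A connected finite simple graph G on n vertices has matching number ⌊n/2⌋ if and only if G has a spanning tree T with matching number ⌊n/2⌋. -/
open SimpleGraph

section Aux

variable {V : Type*}

/-- Transfer a subgraph whose spanning coe is below `T` to a subgraph of `T`. -/
def copyTo {G : SimpleGraph V} (M : G.Subgraph) (T : SimpleGraph V)
    (h : M.spanningCoe ≤ T) : T.Subgraph :=
  ⟨M.verts, M.Adj, fun hvw => h hvw, fun hvw => M.edge_vert hvw, M.symm⟩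

lemma copyTo_isMatching {G : SimpleGraph V} {M : G.Subgraph} {T : SimpleGraph V}
    (h : M.spanningCoe ≤ T) (hM : M.IsMatching) : (copyTo M T h).IsMatching := hM

lemma copyTo_edgeSet {G : SimpleGraph V} (M : G.Subgraph) {T : SimpleGraph V}
    (h : M.spanningCoe ≤ T) : (copyTo M T h).edgeSet = M.edgeSet := rfl

lemma matching_spanningCoe_acyclic {G : SimpleGraph V} {M : G.Subgraph}
    (hM : M.IsMatching) : M.spanningCoe.IsAcyclic := by
  intro v c hc
  cases c with
  | nil => exact hc.not_of_nil
  | @cons _ u _ h p =>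
    rw [Walk.cons_isCycle_iff] at hc
    have hnil : ¬ p.Nil := by
      intro hn
      exact h.ne (hn.eq ▸ rfl)
    have hrev : ¬ p.reverse.Nil := by
      rw [Walk.nil_iff_length_eq, Walk.length_reverse]
      rwa [Walk.nil_iff_length_eq] at hnil
    obtain ⟨x, h', q, hq⟩ := Walk.not_nil_iff.mp hrev
    have hmem : s(v, x) ∈ p.edges := by
      have : s(v, x) ∈ p.reverse.edges := by rw [hq]; simp
      rwa [Walk.edges_reverse, List.mem_reverse] at this
    have hxu : x ≠ u := by
      rintro rfl
      exact hc.2 hmem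
    have hMvu : M.Adj v u := h
    have hMvx : M.Adj v x := h'
    obtain ⟨w, -, huniq⟩ := hM (M.edge_vert hMvu)
    exact hxu ((huniq x hMvx).trans (huniq u hMvu).symm)


lemma sup_edge_acyclic {T : SimpleGraph V} (hT : T.IsAcyclic) {x y : V}
    (hr : ¬T.Reachable x y) : (T ⊔ edge x y).IsAcyclic := by
  intro v c hc
  by_cases he : s(x, y) ∈ c.edges
  · have hconc : (T ⊔ edge x y).Adj x y ∧
        ((T ⊔ edge x y) \ fromEdgeSet {s(x, y)}).Reachable x y :=
      (adj_and_reachable_delete_edges_iff_exists_cycle).2 ⟨v, c, hc, he⟩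
    apply hr
    refine hconc.2.mono ?_
    intro a b hab
    rw [sdiff_adj, sup_adj, edge_adj, fromEdgeSet_adj] at hab
    obtain ⟨hT' | ⟨hor, hne⟩, hnot⟩ := hab
    · exact hT'
    · exact absurd ⟨by rcases hor with ⟨rfl, rfl⟩ | ⟨rfl, rfl⟩ <;> simp [Sym2.eq_swap], hne⟩ hnot
  · have hce : ∀ e ∈ c.edges, e ∈ T.edgeSet := by
      intro e hec
      have := c.edges_subset_edgeSet hec
      rw [edgeSet_sup] at this
      rcases this with hT' | hE
      · exact hT'
      · exfalso
        rw [edge, edgeSet_fromEdgeSet] at hE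
        obtain ⟨h1, -⟩ := hE
        rw [Set.mem_singleton_iff] at h1
        exact he (h1 ▸ hec)
    exact hT (c.transfer T hce) (hc.transfer hce)

lemma exists_tree_between [Finite V] {G H : SimpleGraph V} (hG : G.Connected)
    (hH : H ≤ G) (hHa : H.IsAcyclic) : ∃ T, H ≤ T ∧ T ≤ G ∧ T.IsTree := by
  classical
  set S : Set (SimpleGraph V) := {K | H ≤ K ∧ K ≤ G ∧ K.IsAcyclic} with hS
  obtain ⟨T, hTS, hTmax⟩ := Set.Finite.exists_maximalFor id S (Set.toFinite S)
    ⟨H, le_refl H, hH, hHa⟩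
  obtain ⟨hHT, hTG, hTa⟩ := hTS
  refine ⟨T, hHT, hTG, ⟨?_, hTa⟩⟩
  have step : ∀ {x y : V}, G.Adj x y → T.Reachable x y := by
    intro x y hxy
    by_contra hre
    have hsup : T ⊔ edge x y ∈ S := by
      refine ⟨le_trans hHT le_sup_left, sup_le hTG ?_, sup_edge_acyclic hTa hre⟩
      intro a b hab
      rw [edge_adj] at hab
      rcases hab.1 with ⟨rfl, rfl⟩ | ⟨rfl, rfl⟩
      · exact hxy
      · exact hxy.symm
    have heq : T = T ⊔ edge x y := le_antisymm le_sup_left (hTmax hsup le_sup_left)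
    apply hre
    have hadj : T.Adj x y := by
      have : (edge x y : SimpleGraph V) ≤ T := heq ▸ le_sup_right
      exact this ((edge_adj x y x y).2 ⟨Or.inl ⟨rfl, rfl⟩, hxy.ne⟩)
    exact hadj.reachable
  have hne : Nonempty V := hG.nonempty
  refine Connected.mk ?_
  intro u v
  obtain ⟨w⟩ := hG u v
  induction w with
  | nil => rfl
  | cons h p ih => exact (step h).trans ih

variable [Fintype V]

lemma matching_bound {G : SimpleGraph V} {M : G.Subgraph} (hM : M.IsMatching) :
    M.edgeSet.ncard ≤ Fintype.card V / 2 := by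
  classical
  rw [Nat.le_div_iff_mul_le (by norm_num)]
  -- f : V → Sym2 V sends each matched vertex to its matching edge
  set f : V → Sym2 V := fun v => if hv : v ∈ M.verts then (hM.toEdge ⟨v, hv⟩ : Sym2 V) else s(v, v) with hf
  have key : ∀ {x y : V}, M.Adj x y → f x = s(x, y) := by
    intro x y hxy
    have hx : x ∈ M.verts := M.edge_vert hxy
    simp only [hf, dif_pos hx]
    exact congrArg Subtype.val (hM.toEdge_eq_of_adj hxy)
  set s : Finset V := M.verts.toFinset with hs
  set t : Finset (Sym2 V) := M.edgeSet.toFinset with ht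
  have hmaps : ∀ a ∈ s, f a ∈ t := by
    intro a ha
    rw [hs, Set.mem_toFinset] at ha
    obtain ⟨b, hb, -⟩ := hM ha
    rw [key hb, ht, Set.mem_toFinset]
    exact hb
  have hfiber : ∀ e ∈ t, 2 ≤ (s.filter fun a => f a = e).card := by
    intro e he
    rw [ht, Set.mem_toFinset] at he
    induction e with
    | h x y =>
      rw [Subgraph.mem_edgeSet] at he
      have hxy : x ≠ y := (M.adj_sub he).ne
      have h1 : x ∈ s.filter fun a => f a = s(x, y) := by
        simp only [Finset.mem_filter, hs, Set.mem_toFinset]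
        exact ⟨M.edge_vert he, key he⟩
      have h2 : y ∈ s.filter fun a => f a = s(x, y) := by
        simp only [Finset.mem_filter, hs, Set.mem_toFinset]
        refine ⟨M.edge_vert he.symm, ?_⟩
        rw [key he.symm, Sym2.eq_swap]
      calc 2 = ({x, y} : Finset V).card := by rw [Finset.card_insert_of_notMem (by simpa using hxy), Finset.card_singleton]
      _ ≤ _ := Finset.card_le_card (by intro a ha; rcases Finset.mem_insert.1 ha with rfl | ha; exact h1; rw [Finset.mem_singleton] at ha; exact ha ▸ h2)
  have := Finset.mul_card_image_le_card_of_maps_to hmaps 2 hfiber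
  have hcard : M.edgeSet.ncard = t.card := by
    rw [ht, Set.ncard_eq_toFinset_card']
  rw [hcard]
  calc t.card * 2 = 2 * t.card := mul_comm _ _
  _ ≤ s.card := this
  _ ≤ Fintype.card V := Finset.card_le_univ s

omit [Fintype V] in
lemma matchSet_nonempty (G : SimpleGraph V) :
    {k | ∃ M : G.Subgraph, M.IsMatching ∧ M.edgeSet.ncard = k}.Nonempty := by
  refine ⟨0, ⊥, ?_, by rw [Subgraph.edgeSet_bot]; simp⟩
  intro v hv
  rw [Subgraph.verts_bot] at hv
  exact absurd hv (Set.notMem_empty v)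

lemma matchSet_bdd (G : SimpleGraph V) :
    ∀ k ∈ {k | ∃ M : G.Subgraph, M.IsMatching ∧ M.edgeSet.ncard = k},
      k ≤ Fintype.card V / 2 := by
  rintro k ⟨M, hM, rfl⟩
  exact matching_bound hM

lemma matchNum_le_half (G : SimpleGraph V) : matchNum G ≤ Fintype.card V / 2 :=
  csSup_le (matchSet_nonempty G) (matchSet_bdd G)

lemma matchNum_mem (G : SimpleGraph V) :
    matchNum G ∈ {k | ∃ M : G.Subgraph, M.IsMatching ∧ M.edgeSet.ncard = k} :=
  Nat.sSup_mem (matchSet_nonempty G) ⟨Fintype.card V / 2, matchSet_bdd G⟩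

lemma matchNum_mono {T G : SimpleGraph V} (h : T ≤ G) : matchNum T ≤ matchNum G := by
  refine csSup_le_csSup ⟨Fintype.card V / 2, matchSet_bdd G⟩ (matchSet_nonempty T) ?_
  rintro k ⟨M, hM, rfl⟩
  exact ⟨copyTo M G (le_trans M.spanningCoe_le h), copyTo_isMatching _ hM, rfl⟩

end Aux

/-- A connected graph on `n` vertices has matching number `⌊n/2⌋` iff it has a
spanning tree with matching number `⌊n/2⌋`. -/
theorem matchNum_full_iff_spanning_tree {V : Type*} [Fintype V] (G : SimpleGraph V)
    (hG : G.Connected) :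
    matchNum G = Fintype.card V / 2 ↔
      ∃ T : SimpleGraph V, T ≤ G ∧ T.IsTree ∧ matchNum T = Fintype.card V / 2 := by
  constructor
  · intro hnum
    obtain ⟨M, hM, hMcard⟩ := matchNum_mem G
    obtain ⟨T, hHT, hTG, hTree⟩ :=
      exists_tree_between hG M.spanningCoe_le (matching_spanningCoe_acyclic hM)
    refine ⟨T, hTG, hTree, le_antisymm (matchNum_le_half T) ?_⟩
    rw [← hnum, ← hMcard]
    exact le_csSup ⟨Fintype.card V / 2, matchSet_bdd T⟩
      ⟨copyTo M T hHT, copyTo_isMatching _ hM, rfl⟩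
  · rintro ⟨T, hTG, -, hT⟩
    exact le_antisymm (matchNum_le_half G) (hT ▸ matchNum_mono hTG)
end

section
/- Let T be a finite tree on n vertices with n even. If T has a perfect matching, then for every vertex v, the forest T - v has exactly one connected component with an odd number of vertices. -/
/-- If a tree `T` on an even number of vertices has a perfect matching, then for every
vertex `v`, the forest `T - v` has exactly one odd component. -/
theorem unique_odd_component_of_perfect_matching {V : Type*} [Fintype V]
    (T : SimpleGraph V) (hT : T.IsTree) (hn : Even (Fintype.card V))
    (hM : ∃ M : T.Subgraph, M.IsPerfectMatching) :
    ∀ v : V, ∃! c : (T.induce {v}ᶜ).ConnectedComponent, Odd (Nat.card c.supp) := by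
  classical
  obtain ⟨M, hM⟩ := hM
  intro v
  obtain ⟨w, hw⟩ := hM.1 (hM.2 v)
  have hwv : (w : V) ∈ ({v}ᶜ : Set V) := by
    simp only [Set.mem_compl_iff, Set.mem_singleton_iff]
    intro h; subst h; exact (M.adj_sub hw.1).ne rfl
  -- Key: every odd component contains w
  have key : ∀ c : (T.induce ({v}ᶜ : Set V)).ConnectedComponent,
      Odd (Nat.card c.supp) → (⟨w, hwv⟩ : ({v}ᶜ : Set V)) ∈ c.supp := by
    intro c hc
    by_contra hwc
    have hmatch : (M.induce (Subtype.val '' c.supp)).IsMatching := by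
      rintro x ⟨⟨u, hu⟩, husupp, rfl⟩
      obtain ⟨y, hy⟩ := hM.1 (hM.2 u)
      have hyv : y ∈ ({v}ᶜ : Set V) := by
        simp only [Set.mem_compl_iff, Set.mem_singleton_iff]
        rintro rfl
        have : u = w := hw.2 u hy.1.symm
        exact hwc (by simpa [this] using husupp)
      have hadj : (T.induce ({v}ᶜ : Set V)).Adj ⟨u, hu⟩ ⟨y, hyv⟩ := by
        simpa using M.adj_sub hy.1
      have hysupp : (⟨y, hyv⟩ : ({v}ᶜ : Set V)) ∈ c.supp := by
        rw [SimpleGraph.ConnectedComponent.mem_supp_iff] at husupp ⊢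
        rw [← husupp]
        exact (SimpleGraph.ConnectedComponent.connectedComponentMk_eq_of_adj hadj).symm
      refine ⟨y, ⟨⟨⟨u, hu⟩, husupp, rfl⟩, ⟨⟨y, hyv⟩, hysupp, rfl⟩, hy.1⟩, ?_⟩
      intro z hz
      exact hy.2 z hz.2.2
    apply Nat.not_even_iff_odd.2 hc
    haveI : Fintype ↑(M.induce (Subtype.val '' c.supp)).verts := Fintype.ofFinite _
    have heven := hmatch.even_card
    haveI : Fintype (c.supp) := Fintype.ofFinite _
    simpa [SimpleGraph.Subgraph.induce_verts, Set.toFinset_image,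
      Finset.card_image_of_injective _ Subtype.val_injective, Set.toFinset_card,
      Nat.card_eq_fintype_card] using heven
  -- Existence: the number of vertices of T - v is odd, so some component is odd
  have hodd : Odd (Nat.card ({v}ᶜ : Set V)) := by
    have h1 : Nat.card ({v}ᶜ : Set V) = Fintype.card V - 1 := by
      rw [Nat.card_eq_fintype_card, Fintype.card_compl_set, Set.card_singleton]
    rw [h1]
    have hpos : 1 ≤ Fintype.card V := Fintype.card_pos_iff.mpr ⟨v⟩
    exact Nat.Even.sub_odd hpos hn odd_one
  rw [← SimpleGraph.odd_ncard_oddComponents (G := T.induce ({v}ᶜ : Set V))] at hodd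
  simp only [SimpleGraph.oddComponents, ← Nat.card_coe_set_eq] at hodd
  have hne : Nonempty {c : (T.induce ({v}ᶜ : Set V)).ConnectedComponent |
      Odd (Nat.card c.supp)} := (Nat.card_pos_iff.mp hodd.pos).1
  obtain ⟨⟨c, hc⟩⟩ := hne
  refine ⟨c, hc, fun c' hc' => ?_⟩
  have h1 := key c hc
  have h2 := key c' hc'
  rw [SimpleGraph.ConnectedComponent.mem_supp_iff] at h1 h2
  rw [← h1, ← h2]
end
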